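/- arXiv:math/0507118 — 2 statements merged into one kernel-verified Lean document; each statement's English description precedes it below -/
import Mathlib

section
/- The groups PSL(3,F2) and PSL(2,F7) are isomorphic. -/
open scoped MatrixGroups

set_option maxRecDepth 40000
set_option maxHeartbeats 4000000

private noncomputable def tbl (n : Nat) : Matrix (Fin 3) (Fin 3) (ZMod 2) :=
  (if n < 1230 then (if n < 638 then (if n < 344 then (if n < 231 then (if n < 122 then (if n < 96 then (if n < 93 then (if n < 92 then (if n = 91 then !![0, 0, 1; 1, 1, 1; 1, 0, 0] else 1) else (if n = 92 then !![1, 0, 0; 0, 1, 1; 1, 1, 0] else 1)) else (if n < 94 then (if n = 93 then !![1, 1, 0; 1, 0, 1; 1, 1, 1] else 1) else (if n < 95 then (if n = 94 then !![1, 1, 1; 0, 1, 0; 0, 1, 1] else 1) else (if n = 95 then !![0, 1, 1; 0, 0, 1; 1, 0, 1] else 1)))) else (if n < 119 then (if n < 97 then (if n = 96 then !![1, 0, 1; 1, 0, 0; 0, 1, 0] else 1) else (if n = 97 then !![0, 1, 0; 1, 1, 0; 0, 0, 1] else 1)) else (if n < 120 then (if n = 119 then !![1, 0, 0; 0, 1,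 0; 1, 0, 1] else 1) else (if n < 121 then (if n = 120 then !![1, 1, 1; 1, 0, 0; 0, 0, 1] else 1) else (if n = 121 then !![1, 0, 1; 1, 1, 1; 1, 1, 0] else 1))))) else (if n < 162 then (if n < 124 then (if n < 123 then (if n = 122 then !![0, 0, 1; 1, 0, 1; 0, 1, 1] else 1) else (if n = 123 then !![1, 1, 0; 0, 0, 1; 0, 1, 0] else 1)) else (if n < 125 then (if n = 124 then !![0, 1, 1; 1, 1, 0; 1, 0, 0] else 1) else (if n < 161 then (if n = 125 then !![0, 1, 0; 0, 1, 1; 1, 1, 1] else 1) else (if n = 161 then !![1, 0, 1; 0, 1, 1; 0, 0, 1] else 1)))) else (if n < 165 then (if n < 163 then (if n = 162 then !![1, 0, 0; 0, 0, 1; 1, 1, 1] else 1) else (if n < 164 then (if n = 163 then !![0, 1, 1; 1, 1, 1; 0, 1, 0] else 1) else (if n = 164 then !![0, 0, 1; 0, 1, 0; 1, 1, 0] else 1))) else (if n < 166 then (if n = 165 then !![1, 1, 1; 1, 1, 0; 1, 0, 1] else 1) else (if n < 167 then (if n = 166 then !![0, 1, 0; 1, 0, 1; 1, 0, 0] else 1)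 else (if n = 167 then !![1, 1, 0; 1, 0, 0; 0, 1, 1] else 1)))))) else (if n < 276 then (if n < 236 then (if n < 233 then (if n < 232 then (if n = 231 then !![1, 0, 1; 0, 1, 1; 0, 0, 1] else 1) else (if n = 232 then !![1, 1, 0; 1, 0, 0; 0, 1, 1] else 1)) else (if n < 234 then (if n = 233 then !![0, 1, 0; 1, 0, 1; 1, 0, 0] else 1) else (if n < 235 then (if n = 234 then !![1, 1, 1; 1, 1, 0; 1, 0, 1] else 1) else (if n = 235 then !![0, 0, 1; 0, 1, 0; 1, 1, 0] else 1)))) else (if n < 273 then (if n < 237 then (if n = 236 then !![0, 1, 1; 1, 1, 1; 0, 1, 0] else 1) else (if n = 237 then !![1, 0, 0; 0, 0, 1; 1, 1, 1] else 1)) else (if n < 274 then (if n = 273 then !![1, 0, 0; 0, 1, 0; 1, 0, 1] else 1) else (if n < 275 then (if n = 274 then !![0, 1, 0; 0, 1, 1; 1, 1, 1] else 1) else (if n = 275 then !![0, 1, 1; 1, 1, 0; 1, 0, 0] else 1))))) else (if n < 302 then (if n < 278 then (if n < 277 then (if n = 276 then !![1, 1, 0; 0, 0, 1; 0, 1, 0]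 else 1) else (if n = 277 then !![0, 0, 1; 1, 0, 1; 0, 1, 1] else 1)) else (if n < 279 then (if n = 278 then !![1, 0, 1; 1, 1, 1; 1, 1, 0] else 1) else (if n < 301 then (if n = 279 then !![1, 1, 1; 1, 0, 0; 0, 0, 1] else 1) else (if n = 301 then !![0, 0, 1; 1, 1, 1; 1, 0, 0] else 1)))) else (if n < 305 then (if n < 303 then (if n = 302 then !![0, 1, 0; 1, 1, 0; 0, 0, 1] else 1) else (if n < 304 then (if n = 303 then !![1, 0, 1; 1, 0, 0; 0, 1, 0] else 1) else (if n = 304 then !![0, 1, 1; 0, 0, 1; 1, 0, 1] else 1))) else (if n < 306 then (if n = 305 then !![1, 1, 1; 0, 1, 0; 0, 1, 1] else 1) else (if n < 307 then (if n = 306 then !![1, 1, 0; 1, 0, 1; 1, 1, 1] else 1) else (if n = 307 then !![1, 0, 0; 0, 1, 1; 1, 1, 0] else 1))))))) else (if n < 491 then (if n < 417 then (if n < 379 then (if n < 358 then (if n < 351 then (if n = 344 then !![1, 0, 0; 0, 1, 0; 0, 0, 1] else 1) else (if n = 351 then !![0, 0, 1; 0, 1, 1; 1, 1, 0] else 1))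 else (if n < 365 then (if n = 358 then !![1, 1, 0; 1, 0, 1; 0, 1, 0] else 1) else (if n < 372 then (if n = 365 then !![0, 1, 0; 1, 1, 1; 0, 1, 1] else 1) else (if n = 372 then !![0, 1, 1; 1, 0, 0; 1, 0, 1] else 1)))) else (if n < 393 then (if n < 386 then (if n = 379 then !![1, 0, 1; 0, 0, 1; 1, 1, 1] else 1) else (if n = 386 then !![1, 1, 1; 1, 1, 0; 1, 0, 0] else 1)) else (if n < 401 then (if n = 393 then !![0, 0, 1; 1, 0, 1; 0, 1, 0] else 1) else (if n < 409 then (if n = 401 then !![0, 1, 0; 1, 1, 1; 1, 0, 0] else 1) else (if n = 409 then !![1, 0, 0; 0, 1, 1; 1, 0, 1] else 1))))) else (if n < 451 then (if n < 433 then (if n < 425 then (if n = 417 then !![1, 0, 1; 1, 1, 0; 1, 1, 1] else 1) else (if n = 425 then !![1, 1, 1; 0, 0, 1; 0, 1, 1] else 1)) else (if n < 434 then (if n = 433 then !![0, 1, 1; 0, 1, 0; 1, 1, 0] else 1) else (if n < 442 then (if n = 434 then !![1, 1, 0; 1, 0, 0; 0, 0, 1] else 1) else (if n = 442 then !![0,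 1, 0; 0, 1, 1; 1, 0, 1] else 1)))) else (if n < 471 then (if n < 460 then (if n = 451 then !![1, 0, 1; 1, 1, 0; 0, 0, 1] else 1) else (if n < 462 then (if n = 460 then !![0, 0, 1; 1, 1, 1; 0, 1, 1] else 1) else (if n = 462 then !![0, 1, 1; 1, 0, 0; 1, 1, 0] else 1))) else (if n < 480 then (if n = 471 then !![1, 1, 0; 0, 1, 0; 1, 1, 1] else 1) else (if n < 489 then (if n = 480 then !![1, 1, 1; 1, 0, 1; 1, 0, 0] else 1) else (if n = 489 then !![1, 0, 0; 0, 0, 1; 0, 1, 0] else 1)))))) else (if n < 566 then (if n < 527 then (if n < 504 then (if n < 501 then (if n = 491 then !![1, 0, 1; 1, 1, 1; 0, 1, 1] else 1) else (if n = 501 then !![0, 1, 1; 1, 0, 0; 0, 1, 0] else 1)) else (if n < 514 then (if n = 504 then !![0, 1, 0; 1, 1, 0; 1, 1, 1] else 1) else (if n < 524 then (if n = 514 then !![1, 1, 1; 0, 0, 1; 1, 0, 0] else 1) else (if n = 524 then !![1, 0, 0; 1, 0, 1; 1, 1, 0] else 1)))) else (if n < 540 then (if n < 537 then (if n = 527 then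 !![1, 1, 0; 0, 1, 1; 0, 0, 1] else 1) else (if n = 537 then !![0, 0, 1; 0, 1, 0; 1, 0, 1] else 1)) else (if n < 551 then (if n = 540 then !![0, 1, 1; 1, 1, 0; 1, 1, 1] else 1) else (if n < 555 then (if n = 551 then !![1, 1, 1; 0, 0, 1; 1, 0, 1] else 1) else (if n = 555 then !![1, 0, 1; 1, 0, 0; 1, 1, 0] else 1))))) else (if n < 601 then (if n < 574 then (if n < 570 then (if n = 566 then !![1, 1, 0; 0, 1, 0; 0, 0, 1] else 1) else (if n = 570 then !![0, 0, 1; 0, 1, 1; 1, 0, 0] else 1)) else (if n < 585 then (if n = 574 then !![1, 0, 0; 1, 1, 1; 0, 1, 0] else 1) else (if n < 589 then (if n = 585 then !![0, 1, 0; 1, 0, 1; 0, 1, 1] else 1) else (if n = 589 then !![1, 1, 1; 1, 0, 0; 1, 1, 0] else 1)))) else (if n < 616 then (if n < 606 then (if n = 601 then !![1, 1, 0; 0, 1, 0; 0, 1, 1] else 1) else (if n < 611 then (if n = 606 then !![0, 1, 1; 0, 0, 1; 1, 0, 0] else 1) else (if n = 611 then !![1, 0, 0; 1, 0, 1; 0,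 1, 0] else 1))) else (if n < 628 then (if n = 616 then !![0, 1, 0; 1, 1, 1; 0, 0, 1] else 1) else (if n < 633 then (if n = 628 then !![0, 0, 1; 1, 1, 0; 1, 0, 1] else 1) else (if n = 633 then !![1, 0, 1; 0, 1, 1; 1, 1, 1] else 1)))))))) else (if n < 935 then (if n < 788 then (if n < 711 then (if n < 675 then (if n < 657 then (if n < 644 then (if n = 638 then !![1, 1, 0; 0, 0, 1; 1, 0, 0] else 1) else (if n = 644 then !![1, 0, 0; 1, 0, 1; 1, 1, 1] else 1)) else (if n < 663 then (if n = 657 then !![1, 1, 1; 0, 1, 0; 0, 0, 1] else 1) else (if n < 669 then (if n = 663 then !![0, 0, 1; 0, 1, 1; 1, 0, 1] else 1) else (if n = 669 then !![1, 0, 1; 1, 1, 0; 0, 1, 0] else 1)))) else (if n < 690 then (if n < 681 then (if n = 675 then !![0, 1, 0; 1, 0, 0; 0, 1, 1] else 1) else (if n = 681 then !![0, 1, 1; 1, 1, 1; 1, 1, 0] else 1)) else (if n < 697 then (if n = 690 then !![0, 0, 1; 1, 1, 1; 1, 0, 1] else 1) else (if n < 704 then (if n = 697 then !![0, 1, 0;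 0, 0, 1; 1, 0, 0] else 1) else (if n = 704 then !![1, 0, 1; 0, 1, 0; 1, 1, 0] else 1))))) else (if n < 743 then (if n < 725 then (if n < 718 then (if n = 711 then !![1, 0, 0; 1, 0, 1; 0, 1, 1] else 1) else (if n = 718 then !![1, 1, 0; 1, 0, 0; 1, 1, 1] else 1)) else (if n < 732 then (if n = 725 then !![0, 1, 1; 1, 1, 0; 0, 0, 1] else 1) else (if n < 739 then (if n = 732 then !![1, 1, 1; 0, 1, 1; 0, 1, 0] else 1) else (if n = 739 then !![1, 1, 1; 0, 1, 0; 1, 0, 0] else 1)))) else (if n < 769 then (if n < 754 then (if n = 743 then !![1, 1, 0; 1, 1, 1; 0, 1, 1] else 1) else (if n < 758 then (if n = 754 then !![1, 0, 0; 1, 1, 0; 1, 0, 1] else 1) else (if n = 758 then !![0, 1, 1; 1, 0, 0; 0, 0, 1] else 1))) else (if n < 773 then (if n = 769 then !![1, 0, 1; 0, 1, 1; 0, 1, 0] else 1) else (if n < 777 then (if n = 773 then !![0, 0, 1; 1, 0, 1; 1, 1, 1] else 1) else (if n = 777 then !![0, 1, 0; 0, 0, 1; 1, 1, 0] else 1))))))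 else (if n < 859 then (if n < 821 then (if n < 804 then (if n < 796 then (if n = 788 then !![0, 1, 0; 1, 1, 0; 0, 1, 1] else 1) else (if n = 796 then !![1, 0, 1; 0, 1, 0; 0, 0, 1] else 1)) else (if n < 805 then (if n = 804 then !![0, 1, 1; 1, 0, 1; 1, 0, 0] else 1) else (if n < 813 then (if n = 805 then !![0, 0, 1; 0, 1, 1; 1, 1, 1] else 1) else (if n = 813 then !![1, 0, 0; 0, 0, 1; 1, 1, 0] else 1)))) else (if n < 837 then (if n < 829 then (if n = 821 then !![1, 1, 1; 1, 0, 0; 0, 1, 0] else 1) else (if n = 829 then !![1, 1, 0; 1, 1, 1; 1, 0, 1] else 1)) else (if n < 842 then (if n = 837 then !![1, 1, 0; 1, 0, 1; 0, 0, 1] else 1) else (if n < 847 then (if n = 842 then !![1, 0, 0; 1, 1, 0; 1, 1, 1] else 1) else (if n = 847 then !![0, 0, 1; 1, 0, 0; 0, 1, 1] else 1))))) else (if n < 895 then (if n < 869 then (if n < 864 then (if n = 859 then !![1, 1, 1; 0, 0, 1; 0, 1, 0] else 1) else (if n = 864 then !![0, 1, 1; 1, 1, 1; 1, 0, 1] else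 1)) else (if n < 881 then (if n = 869 then !![0, 1, 0; 0, 1, 1; 1, 1, 0] else 1) else (if n < 886 then (if n = 881 then !![1, 0, 1; 0, 1, 0; 1, 0, 0] else 1) else (if n = 886 then !![1, 0, 1; 1, 0, 0; 1, 1, 1] else 1)))) else (if n < 915 then (if n < 897 then (if n = 895 then !![0, 1, 1; 1, 0, 1; 0, 1, 0] else 1) else (if n < 906 then (if n = 897 then !![1, 1, 1; 0, 1, 1; 0, 0, 1] else 1) else (if n = 906 then !![0, 1, 0; 1, 1, 1; 1, 1, 0] else 1))) else (if n < 917 then (if n = 915 then !![0, 0, 1; 0, 1, 0; 1, 0, 0] else 1) else (if n < 926 then (if n = 917 then !![1, 1, 0; 0, 0, 1; 1, 0, 1] else 1) else (if n = 926 then !![1, 0, 0; 1, 1, 0; 0, 1, 1] else 1))))))) else (if n < 1083 then (if n < 1007 then (if n < 972 then (if n < 947 then (if n < 941 then (if n = 935 then !![1, 0, 0; 0, 1, 1; 0, 1, 0] else 1) else (if n = 941 then !![0, 0, 1; 1, 0, 0; 1, 1, 0] else 1)) else (if n < 953 then (if n = 947 then !![0, 1, 0; 0, 0, 1; 1, 1,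 1] else 1) else (if n < 959 then (if n = 953 then !![1, 1, 0; 0, 1, 0; 1, 0, 1] else 1) else (if n = 959 then !![1, 1, 1; 1, 1, 0; 0, 1, 1] else 1)))) else (if n < 984 then (if n < 978 then (if n = 972 then !![1, 0, 1; 1, 1, 1; 1, 0, 0] else 1) else (if n = 978 then !![0, 1, 1; 1, 0, 1; 0, 0, 1] else 1)) else (if n < 987 then (if n = 984 then !![0, 1, 1; 0, 0, 1; 1, 1, 0] else 1) else (if n < 997 then (if n = 987 then !![1, 1, 1; 0, 1, 1; 1, 0, 1] else 1) else (if n = 997 then !![1, 1, 0; 1, 1, 1; 0, 1, 0] else 1))))) else (if n < 1041 then (if n < 1020 then (if n < 1010 then (if n = 1007 then !![1, 0, 1; 1, 1, 0; 1, 0, 0] else 1) else (if n = 1010 then !![0, 1, 0; 1, 0, 1; 0, 0, 1] else 1)) else (if n < 1023 then (if n = 1020 then !![1, 0, 0; 0, 1, 0; 0, 1, 1] else 1) else (if n < 1034 then (if n = 1023 then !![0, 0, 1; 1, 0, 0; 1, 1, 1] else 1) else (if n = 1034 then !![1, 0, 1; 0, 1, 1; 1, 0, 0] else 1)))) else (if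 n < 1062 then (if n < 1048 then (if n = 1041 then !![0, 0, 1; 1, 0, 0; 0, 1, 0] else 1) else (if n < 1055 then (if n = 1048 then !![0, 1, 1; 0, 1, 0; 1, 1, 1] else 1) else (if n = 1055 then !![1, 0, 0; 1, 1, 1; 1, 1, 0] else 1))) else (if n < 1069 then (if n = 1062 then !![0, 1, 0; 1, 1, 0; 1, 0, 1] else 1) else (if n < 1076 then (if n = 1069 then !![1, 1, 1; 1, 0, 1; 0, 0, 1] else 1) else (if n = 1076 then !![1, 1, 0; 0, 0, 1; 0, 1, 1] else 1)))))) else (if n < 1148 then (if n < 1115 then (if n < 1093 then (if n < 1088 then (if n = 1083 then !![0, 0, 1; 0, 1, 0; 1, 1, 1] else 1) else (if n = 1088 then !![1, 1, 0; 1, 1, 1; 1, 0, 0] else 1)) else (if n < 1105 then (if n = 1093 then !![0, 1, 0; 1, 0, 0; 1, 0, 1] else 1) else (if n < 1110 then (if n = 1105 then !![1, 1, 1; 1, 0, 1; 0, 1, 1] else 1) else (if n = 1110 then !![1, 0, 0; 0, 1, 1; 0, 0, 1] else 1)))) else (if n < 1132 then (if n < 1120 then (if n = 1115 then !![1, 0,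 1; 0, 0, 1; 1, 1, 0] else 1) else (if n = 1120 then !![0, 1, 1; 1, 1, 0; 0, 1, 0] else 1)) else (if n < 1135 then (if n = 1132 then !![1, 1, 0; 1, 0, 0; 1, 0, 1] else 1) else (if n < 1145 then (if n = 1135 then !![0, 1, 1; 1, 0, 1; 1, 1, 1] else 1) else (if n = 1145 then !![1, 0, 0; 1, 1, 1; 0, 0, 1] else 1))))) else (if n < 1189 then (if n < 1168 then (if n < 1158 then (if n = 1148 then !![1, 0, 1; 0, 0, 1; 0, 1, 0] else 1) else (if n = 1158 then !![1, 1, 1; 0, 1, 0; 1, 1, 0] else 1)) else (if n < 1171 then (if n = 1168 then !![0, 0, 1; 1, 1, 0; 0, 1, 1] else 1) else (if n < 1181 then (if n = 1171 then !![0, 1, 0; 0, 1, 1; 1, 0, 0] else 1) else (if n = 1181 then !![0, 1, 1; 1, 1, 1; 0, 0, 1] else 1)))) else (if n < 1206 then (if n < 1190 then (if n = 1189 then !![0, 1, 0; 0, 0, 1; 1, 0, 1] else 1) else (if n < 1198 then (if n = 1190 then !![1, 1, 1; 1, 0, 1; 1, 1, 0] else 1) else (if n = 1198 then !![0, 0,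 1; 1, 1, 0; 1, 0, 0] else 1))) else (if n < 1214 then (if n = 1206 then !![1, 0, 1; 1, 0, 0; 0, 1, 1] else 1) else (if n < 1222 then (if n = 1214 then !![1, 1, 0; 0, 1, 1; 0, 1, 0] else 1) else (if n = 1222 then !![1, 0, 0; 0, 1, 0; 1, 1, 1] else 1))))))))) else (if n < 1816 then (if n < 1521 then (if n < 1374 then (if n < 1298 then (if n < 1260 then (if n < 1242 then (if n < 1236 then (if n = 1230 then !![0, 1, 0; 1, 0, 1; 1, 1, 0] else 1) else (if n = 1236 then !![1, 0, 0; 1, 1, 0; 0, 0, 1] else 1)) else (if n < 1248 then (if n = 1242 then !![1, 0, 1; 0, 0, 1; 0, 1, 1] else 1) else (if n < 1254 then (if n = 1248 then !![1, 1, 0; 0, 1, 1; 1, 1, 1] else 1) else (if n = 1254 then !![0, 0, 1; 1, 1, 1; 0, 1, 0] else 1)))) else (if n < 1279 then (if n < 1273 then (if n = 1260 then !![0, 1, 1; 0, 1, 0; 1, 0, 0] else 1) else (if n = 1273 then !![1, 1, 1; 1, 0, 0; 1, 0, 1] else 1)) else (if n < 1283 then (if n = 1279 then !![1, 0, 0;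 0, 0, 1; 0, 1, 1] else 1) else (if n < 1294 then (if n = 1283 then !![1, 1, 1; 0, 1, 1; 1, 1, 0] else 1) else (if n = 1294 then !![0, 0, 1; 1, 1, 0; 0, 1, 0] else 1))))) else (if n < 1330 then (if n < 1313 then (if n < 1302 then (if n = 1298 then !![0, 1, 1; 0, 1, 0; 1, 0, 1] else 1) else (if n = 1302 then !![1, 1, 0; 1, 0, 1; 1, 0, 0] else 1)) else (if n < 1317 then (if n = 1313 then !![0, 1, 0; 1, 0, 0; 1, 1, 1] else 1) else (if n < 1328 then (if n = 1317 then !![1, 0, 1; 1, 1, 1; 0, 0, 1] else 1) else (if n = 1328 then !![1, 1, 1; 1, 1, 0; 0, 1, 0] else 1)))) else (if n < 1357 then (if n < 1339 then (if n = 1330 then !![1, 0, 1; 0, 1, 0; 0, 1, 1] else 1) else (if n < 1348 then (if n = 1339 then !![1, 1, 0; 0, 1, 1; 1, 0, 0] else 1) else (if n = 1348 then !![0, 1, 0; 1, 0, 0; 0, 0, 1] else 1))) else (if n < 1359 then (if n = 1357 then !![0, 1, 1; 0, 0, 1; 1, 1, 1] else 1) else (if n < 1368 then (if n = 1359 then !![1,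 0, 0; 1, 1, 1; 1, 0, 1] else 1) else (if n = 1368 then !![0, 0, 1; 1, 0, 1; 1, 1, 0] else 1)))))) else (if n < 1443 then (if n < 1409 then (if n < 1388 then (if n < 1381 then (if n = 1374 then !![1, 0, 1; 0, 1, 1; 1, 0, 0] else 1) else (if n = 1381 then !![1, 1, 0; 0, 0, 1; 0, 1, 1] else 1)) else (if n < 1395 then (if n = 1388 then !![1, 1, 1; 1, 0, 1; 0, 0, 1] else 1) else (if n < 1402 then (if n = 1395 then !![0, 1, 0; 1, 1, 0; 1, 0, 1] else 1) else (if n = 1402 then !![1, 0, 0; 1, 1, 1; 1, 1, 0] else 1)))) else (if n < 1423 then (if n < 1416 then (if n = 1409 then !![0, 1, 1; 0, 1, 0; 1, 1, 1] else 1) else (if n = 1416 then !![0, 0, 1; 1, 0, 0; 0, 1, 0] else 1)) else (if n < 1432 then (if n = 1423 then !![1, 1, 1; 1, 1, 0; 0, 1, 0] else 1) else (if n < 1441 then (if n = 1432 then !![0, 0, 1; 1, 0, 1; 1, 1, 0] else 1) else (if n = 1441 then !![1, 0, 0; 1, 1, 1; 1, 0, 1] else 1))))) else (if n < 1483 then (if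 n < 1461 then (if n < 1452 then (if n = 1443 then !![0, 1, 1; 0, 0, 1; 1, 1, 1] else 1) else (if n = 1452 then !![0, 1, 0; 1, 0, 0; 0, 0, 1] else 1)) else (if n < 1463 then (if n = 1461 then !![1, 1, 0; 0, 1, 1; 1, 0, 0] else 1) else (if n < 1472 then (if n = 1463 then !![1, 0, 1; 0, 1, 0; 0, 1, 1] else 1) else (if n = 1472 then !![1, 0, 0; 0, 0, 1; 0, 1, 1] else 1)))) else (if n < 1502 then (if n < 1487 then (if n = 1483 then !![1, 0, 1; 1, 1, 1; 0, 0, 1] else 1) else (if n < 1491 then (if n = 1487 then !![0, 1, 0; 1, 0, 0; 1, 1, 1] else 1) else (if n = 1491 then !![1, 1, 0; 1, 0, 1; 1, 0, 0] else 1))) else (if n < 1506 then (if n = 1502 then !![0, 1, 1; 0, 1, 0; 1, 0, 1] else 1) else (if n < 1517 then (if n = 1506 then !![0, 0, 1; 1, 1, 0; 0, 1, 0] else 1) else (if n = 1517 then !![1, 1, 1; 0, 1, 1; 1, 1, 0] else 1))))))) else (if n < 1668 then (if n < 1594 then (if n < 1558 then (if n < 1533 then (if n < 1527 then (if n = 1521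 then !![0, 1, 0; 1, 0, 1; 1, 1, 0] else 1) else (if n = 1527 then !![1, 1, 1; 1, 0, 0; 1, 0, 1] else 1)) else (if n < 1546 then (if n = 1533 then !![0, 1, 1; 0, 1, 0; 1, 0, 0] else 1) else (if n < 1552 then (if n = 1546 then !![0, 0, 1; 1, 1, 1; 0, 1, 0] else 1) else (if n = 1552 then !![1, 1, 0; 0, 1, 1; 1, 1, 1] else 1)))) else (if n < 1570 then (if n < 1564 then (if n = 1558 then !![1, 0, 1; 0, 0, 1; 0, 1, 1] else 1) else (if n = 1564 then !![1, 0, 0; 1, 1, 0; 0, 0, 1] else 1)) else (if n < 1578 then (if n = 1570 then !![0, 1, 1; 1, 1, 1; 0, 0, 1] else 1) else (if n < 1586 then (if n = 1578 then !![1, 0, 0; 0, 1, 0; 1, 1, 1] else 1) else (if n = 1586 then !![1, 1, 0; 0, 1, 1; 0, 1, 0] else 1))))) else (if n < 1629 then (if n < 1603 then (if n < 1602 then (if n = 1594 then !![1, 0, 1; 1, 0, 0; 0, 1, 1] else 1) else (if n = 1602 then !![0, 0, 1; 1, 1, 0; 1, 0, 0] else 1)) else (if n < 1611 then (if n = 1603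 then !![1, 1, 1; 1, 0, 1; 1, 1, 0] else 1) else (if n < 1619 then (if n = 1611 then !![0, 1, 0; 0, 0, 1; 1, 0, 1] else 1) else (if n = 1619 then !![1, 1, 0; 1, 0, 0; 1, 0, 1] else 1)))) else (if n < 1645 then (if n < 1632 then (if n = 1629 then !![0, 1, 0; 0, 1, 1; 1, 0, 0] else 1) else (if n < 1642 then (if n = 1632 then !![0, 0, 1; 1, 1, 0; 0, 1, 1] else 1) else (if n = 1642 then !![1, 1, 1; 0, 1, 0; 1, 1, 0] else 1))) else (if n < 1655 then (if n = 1645 then !![1, 0, 1; 0, 0, 1; 0, 1, 0] else 1) else (if n < 1665 then (if n = 1655 then !![1, 0, 0; 1, 1, 1; 0, 0, 1] else 1) else (if n = 1665 then !![0, 1, 1; 1, 0, 1; 1, 1, 1] else 1)))))) else (if n < 1739 then (if n < 1707 then (if n < 1685 then (if n < 1673 then (if n = 1668 then !![0, 0, 1; 0, 1, 0; 1, 1, 1] else 1) else (if n = 1673 then !![0, 1, 1; 1, 1, 0; 0, 1, 0] else 1)) else (if n < 1690 then (if n = 1685 then !![1, 0, 1; 0, 0, 1; 1, 1, 0] else 1)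 else (if n < 1695 then (if n = 1690 then !![1, 0, 0; 0, 1, 1; 0, 0, 1] else 1) else (if n = 1695 then !![1, 1, 1; 1, 0, 1; 0, 1, 1] else 1)))) else (if n < 1718 then (if n < 1712 then (if n = 1707 then !![0, 1, 0; 1, 0, 0; 1, 0, 1] else 1) else (if n = 1712 then !![1, 1, 0; 1, 1, 1; 1, 0, 0] else 1)) else (if n < 1725 then (if n = 1718 then !![0, 0, 1; 1, 1, 1; 1, 0, 1] else 1) else (if n < 1732 then (if n = 1725 then !![1, 1, 1; 0, 1, 1; 0, 1, 0] else 1) else (if n = 1732 then !![0, 1, 1; 1, 1, 0; 0, 0, 1] else 1))))) else (if n < 1777 then (if n < 1753 then (if n < 1746 then (if n = 1739 then !![1, 1, 0; 1, 0, 0; 1, 1, 1] else 1) else (if n = 1746 then !![1, 0, 0; 1, 0, 1; 0, 1, 1] else 1)) else (if n < 1760 then (if n = 1753 then !![1, 0, 1; 0, 1, 0; 1, 1, 0] else 1) else (if n < 1767 then (if n = 1760 then !![0, 1, 0; 0, 0, 1; 1, 0, 0] else 1) else (if n = 1767 then !![0, 1, 1; 0, 0, 1; 1, 1, 0] else 1))))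 else (if n < 1793 then (if n < 1780 then (if n = 1777 then !![0, 0, 1; 1, 0, 0; 1, 1, 1] else 1) else (if n < 1790 then (if n = 1780 then !![1, 0, 0; 0, 1, 0; 0, 1, 1] else 1) else (if n = 1790 then !![0, 1, 0; 1, 0, 1; 0, 0, 1] else 1))) else (if n < 1803 then (if n = 1793 then !![1, 0, 1; 1, 1, 0; 1, 0, 0] else 1) else (if n < 1806 then (if n = 1803 then !![1, 1, 0; 1, 1, 1; 0, 1, 0] else 1) else (if n = 1806 then !![1, 1, 1; 0, 1, 1; 1, 0, 1] else 1)))))))) else (if n < 2113 then (if n < 1963 then (if n < 1885 then (if n < 1853 then (if n < 1828 then (if n < 1822 then (if n = 1816 then !![1, 0, 0; 0, 1, 1; 0, 1, 0] else 1) else (if n = 1822 then !![0, 1, 1; 1, 0, 1; 0, 0, 1] else 1)) else (if n < 1834 then (if n = 1828 then !![1, 0, 1; 1, 1, 1; 1, 0, 0] else 1) else (if n < 1847 then (if n = 1834 then !![1, 1, 1; 1, 1, 0; 0, 1, 1] else 1) else (if n = 1847 then !![1, 1, 0; 0, 1, 0; 1, 0, 1] else 1)))) else (if n < 1865 then (if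 n < 1859 then (if n = 1853 then !![0, 1, 0; 0, 0, 1; 1, 1, 1] else 1) else (if n = 1859 then !![0, 0, 1; 1, 0, 0; 1, 1, 0] else 1)) else (if n < 1874 then (if n = 1865 then !![1, 0, 1; 1, 0, 0; 1, 1, 1] else 1) else (if n < 1876 then (if n = 1874 then !![1, 0, 0; 1, 1, 0; 0, 1, 1] else 1) else (if n = 1876 then !![1, 1, 0; 0, 0, 1; 1, 0, 1] else 1))))) else (if n < 1919 then (if n < 1903 then (if n < 1894 then (if n = 1885 then !![0, 0, 1; 0, 1, 0; 1, 0, 0] else 1) else (if n = 1894 then !![0, 1, 0; 1, 1, 1; 1, 1, 0] else 1)) else (if n < 1905 then (if n = 1903 then !![1, 1, 1; 0, 1, 1; 0, 0, 1] else 1) else (if n < 1914 then (if n = 1905 then !![0, 1, 1; 1, 0, 1; 0, 1, 0] else 1) else (if n = 1914 then !![1, 1, 0; 1, 0, 1; 0, 0, 1] else 1)))) else (if n < 1941 then (if n < 1931 then (if n = 1919 then !![1, 0, 1; 0, 1, 0; 1, 0, 0] else 1) else (if n < 1936 then (if n = 1931 then !![0, 1, 0; 0, 1, 1; 1, 1,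 0] else 1) else (if n = 1936 then !![0, 1, 1; 1, 1, 1; 1, 0, 1] else 1))) else (if n < 1946 then (if n = 1941 then !![1, 1, 1; 0, 0, 1; 0, 1, 0] else 1) else (if n < 1958 then (if n = 1946 then !![0, 0, 1; 1, 0, 0; 0, 1, 1] else 1) else (if n = 1958 then !![1, 0, 0; 1, 1, 0; 1, 1, 1] else 1)))))) else (if n < 2031 then (if n < 1996 then (if n < 1979 then (if n < 1971 then (if n = 1963 then !![0, 1, 0; 1, 1, 0; 0, 1, 1] else 1) else (if n = 1971 then !![1, 1, 0; 1, 1, 1; 1, 0, 1] else 1)) else (if n < 1987 then (if n = 1979 then !![1, 1, 1; 1, 0, 0; 0, 1, 0] else 1) else (if n < 1988 then (if n = 1987 then !![1, 0, 0; 0, 0, 1; 1, 1, 0] else 1) else (if n = 1988 then !![0, 0, 1; 0, 1, 1; 1, 1, 1] else 1)))) else (if n < 2012 then (if n < 2004 then (if n = 1996 then !![0, 1, 1; 1, 0, 1; 1, 0, 0] else 1) else (if n = 2004 then !![1, 0, 1; 0, 1, 0; 0, 0, 1] else 1)) else (if n < 2016 then (if n = 2012 then !![1, 1, 1; 0, 1,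 0; 1, 0, 0] else 1) else (if n < 2027 then (if n = 2016 then !![0, 1, 0; 0, 0, 1; 1, 1, 0] else 1) else (if n = 2027 then !![0, 0, 1; 1, 0, 1; 1, 1, 1] else 1))))) else (if n < 2071 then (if n < 2046 then (if n < 2042 then (if n = 2031 then !![1, 0, 1; 0, 1, 1; 0, 1, 0] else 1) else (if n = 2042 then !![0, 1, 1; 1, 0, 0; 0, 0, 1] else 1)) else (if n < 2057 then (if n = 2046 then !![1, 0, 0; 1, 1, 0; 1, 0, 1] else 1) else (if n < 2064 then (if n = 2057 then !![1, 1, 0; 1, 1, 1; 0, 1, 1] else 1) else (if n = 2064 then !![1, 0, 0; 0, 1, 0; 0, 0, 1] else 1)))) else (if n < 2092 then (if n < 2078 then (if n = 2071 then !![1, 1, 1; 1, 1, 0; 1, 0, 0] else 1) else (if n < 2085 then (if n = 2078 then !![1, 0, 1; 0, 0, 1; 1, 1, 1] else 1) else (if n = 2085 then !![0, 1, 1; 1, 0, 0; 1, 0, 1] else 1))) else (if n < 2099 then (if n = 2092 then !![0, 1, 0; 1, 1, 1; 0, 1, 1] else 1) else (if n < 2106 then (if n = 2099 then !![1, 1,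 0; 1, 0, 1; 0, 1, 0] else 1) else (if n = 2106 then !![0, 0, 1; 0, 1, 1; 1, 1, 0] else 1))))))) else (if n < 2260 then (if n < 2177 then (if n < 2143 then (if n < 2125 then (if n < 2119 then (if n = 2113 then !![1, 1, 0; 0, 0, 1; 1, 0, 0] else 1) else (if n = 2119 then !![0, 1, 1; 1, 1, 1; 1, 1, 0] else 1)) else (if n < 2131 then (if n = 2125 then !![0, 1, 0; 1, 0, 0; 0, 1, 1] else 1) else (if n < 2137 then (if n = 2131 then !![1, 0, 1; 1, 1, 0; 0, 1, 0] else 1) else (if n = 2137 then !![0, 0, 1; 0, 1, 1; 1, 0, 1] else 1)))) else (if n < 2162 then (if n < 2149 then (if n = 2143 then !![1, 1, 1; 0, 1, 0; 0, 0, 1] else 1) else (if n = 2149 then !![1, 0, 0; 1, 0, 1; 1, 1, 1] else 1)) else (if n < 2167 then (if n = 2162 then !![1, 1, 1; 1, 0, 0; 1, 1, 0] else 1) else (if n < 2172 then (if n = 2167 then !![1, 0, 1; 0, 1, 1; 1, 1, 1] else 1) else (if n = 2172 then !![0, 0, 1; 1, 1, 0; 1, 0, 1] else 1))))) else (if n <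 2215 then (if n < 2194 then (if n < 2189 then (if n = 2177 then !![0, 1, 0; 1, 1, 1; 0, 0, 1] else 1) else (if n = 2189 then !![1, 0, 0; 1, 0, 1; 0, 1, 0] else 1)) else (if n < 2199 then (if n = 2194 then !![0, 1, 1; 0, 0, 1; 1, 0, 0] else 1) else (if n < 2211 then (if n = 2199 then !![1, 1, 0; 0, 1, 0; 0, 1, 1] else 1) else (if n = 2211 then !![0, 1, 1; 1, 1, 0; 1, 1, 1] else 1)))) else (if n < 2234 then (if n < 2219 then (if n = 2215 then !![0, 1, 0; 1, 0, 1; 0, 1, 1] else 1) else (if n < 2230 then (if n = 2219 then !![1, 0, 0; 1, 1, 1; 0, 1, 0] else 1) else (if n = 2230 then !![0, 0, 1; 0, 1, 1; 1, 0, 0] else 1))) else (if n < 2245 then (if n = 2234 then !![1, 1, 0; 0, 1, 0; 0, 0, 1] else 1) else (if n < 2249 then (if n = 2245 then !![1, 0, 1; 1, 0, 0; 1, 1, 0] else 1) else (if n = 2249 then !![1, 1, 1; 0, 0, 1; 1, 0, 1] else 1)))))) else (if n < 2329 then (if n < 2289 then (if n < 2273 then (if n < 2263 then (if n = 2260 then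 !![1, 0, 1; 1, 1, 1; 0, 1, 1] else 1) else (if n = 2263 then !![0, 0, 1; 0, 1, 0; 1, 0, 1] else 1)) else (if n < 2276 then (if n = 2273 then !![1, 1, 0; 0, 1, 1; 0, 0, 1] else 1) else (if n < 2286 then (if n = 2276 then !![1, 0, 0; 1, 0, 1; 1, 1, 0] else 1) else (if n = 2286 then !![1, 1, 1; 0, 0, 1; 1, 0, 0] else 1)))) else (if n < 2309 then (if n < 2299 then (if n = 2289 then !![0, 1, 0; 1, 1, 0; 1, 1, 1] else 1) else (if n = 2299 then !![0, 1, 1; 1, 0, 0; 0, 1, 0] else 1)) else (if n < 2311 then (if n = 2309 then !![0, 1, 0; 0, 1, 1; 1, 0, 1] else 1) else (if n < 2320 then (if n = 2311 then !![1, 0, 0; 0, 0, 1; 0, 1, 0] else 1) else (if n = 2320 then !![1, 1, 1; 1, 0, 1; 1, 0, 0] else 1))))) else (if n < 2359 then (if n < 2340 then (if n < 2331 then (if n = 2329 then !![1, 1, 0; 0, 1, 0; 1, 1, 1] else 1) else (if n = 2331 then !![0, 1, 1; 1, 0, 0; 1, 1, 0] else 1)) else (if n < 2349 then (if n = 2340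 then !![0, 0, 1; 1, 1, 1; 0, 1, 1] else 1) else (if n < 2358 then (if n = 2349 then !![1, 0, 1; 1, 1, 0; 0, 0, 1] else 1) else (if n = 2358 then !![0, 0, 1; 1, 0, 1; 0, 1, 0] else 1)))) else (if n < 2383 then (if n < 2367 then (if n = 2359 then !![1, 1, 0; 1, 0, 0; 0, 0, 1] else 1) else (if n < 2375 then (if n = 2367 then !![0, 1, 1; 0, 1, 0; 1, 1, 0] else 1) else (if n = 2375 then !![1, 1, 1; 0, 0, 1; 0, 1, 1] else 1))) else (if n < 2391 then (if n = 2383 then !![1, 0, 1; 1, 1, 0; 1, 1, 1] else 1) else (if n < 2399 then (if n = 2391 then !![1, 0, 0; 0, 1, 1; 1, 0, 1] else 1) else (if n = 2399 then !![0, 1, 0; 1, 1, 1; 1, 0, 0] else 1))))))))))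

private noncomputable def W (n : Nat) : Nat :=
  (if n < 1230 then (if n < 638 then (if n < 344 then (if n < 231 then (if n < 122 then (if n < 96 then (if n < 93 then (if n < 92 then (if n = 91 then 1 else 0) else (if n = 92 then 2 else 0)) else (if n < 94 then (if n = 93 then 3 else 0) else (if n < 95 then (if n = 94 then 4 else 0) else (if n = 95 then 5 else 0)))) else (if n < 119 then (if n < 97 then (if n = 96 then 6 else 0) else (if n = 97 then 4 else 0)) else (if n < 120 then (if n = 119 then 12 else 0) else (if n < 121 then (if n = 120 then 9 else 0) else (if n = 121 then 11 else 0))))) else (if n < 162 then (if n < 124 then (if n < 123 then (if n = 122 then 10 else 0) else (if n = 123 then 11 else 0)) else (if n < 125 then (if n = 124 then 11 else 0) else (if n < 161 then (if n = 125 then 8 else 0) else (if n = 161 then 12 else 0)))) else (if n < 165 then (if n < 163 then (if n = 162 then 10 else 0) else (if n < 164 then (if n = 163 then 11 else 0) else (if n = 164 then 13 else 0))) else (if n < 166 then (if n = 165 then 11 else 0) else (if n < 167 then (if n = 166 then 10 else 0) else (if n = 167 then 10 else 0)))))) else (if n < 276 then (if n < 236 then (if n < 233 then (if n < 232 then (if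 n = 231 then 10 else 0) else (if n = 232 then 12 else 0)) else (if n < 234 then (if n = 233 then 11 else 0) else (if n < 235 then (if n = 234 then 9 else 0) else (if n = 235 then 11 else 0)))) else (if n < 273 then (if n < 237 then (if n = 236 then 13 else 0) else (if n = 237 then 8 else 0)) else (if n < 274 then (if n = 273 then 12 else 0) else (if n < 275 then (if n = 274 then 10 else 0) else (if n = 275 then 12 else 0))))) else (if n < 302 then (if n < 278 then (if n < 277 then (if n = 276 then 11 else 0) else (if n = 277 then 11 else 0)) else (if n < 279 then (if n = 278 then 10 else 0) else (if n < 301 then (if n = 279 then 10 else 0) else (if n = 301 then 3 else 0)))) else (if n < 305 then (if n < 303 then (if n = 302 then 6 else 0) else (if n < 304 then (if n = 303 then 8 else 0) else (if n = 304 then 7 else 0))) else (if n < 306 then (if n = 305 then 6 else 0) else (if n < 307 then (if n = 306 then 5 else 0) else (if n = 307 then 4 else 0))))))) else (if n < 491 then (if n < 417 then (if n < 379 then (if n < 358 then (if n < 351 then (if n = 344 then 0 else 0) else (if n = 351 then 1 else 0)) else (if n < 365 then (if n = 358 then 2 else 0) else (if n < 372 then (if n = 365 then 3 else 0) else (if n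 = 372 then 4 else 0)))) else (if n < 393 then (if n < 386 then (if n = 379 then 5 else 0) else (if n = 386 then 6 else 0)) else (if n < 401 then (if n = 393 then 3 else 0) else (if n < 409 then (if n = 401 then 4 else 0) else (if n = 409 then 5 else 0))))) else (if n < 451 then (if n < 433 then (if n < 425 then (if n = 417 then 6 else 0) else (if n = 425 then 7 else 0)) else (if n < 434 then (if n = 433 then 5 else 0) else (if n < 442 then (if n = 434 then 2 else 0) else (if n = 442 then 6 else 0)))) else (if n < 471 then (if n < 460 then (if n = 451 then 7 else 0) else (if n < 462 then (if n = 460 then 8 else 0) else (if n = 462 then 9 else 0))) else (if n < 480 then (if n = 471 then 10 else 0) else (if n < 489 then (if n = 480 then 8 else 0) else (if n = 489 then 5 else 0)))))) else (if n < 566 then (if n < 527 then (if n < 504 then (if n < 501 then (if n = 491 then 8 else 0) else (if n = 501 then 9 else 0)) else (if n < 514 then (if n = 504 then 10 else 0) else (if n < 524 then (if n = 514 then 11 else 0) else (if n = 524 then 8 else 0)))) else (if n < 540 then (if n < 537 then (if n = 527 then 9 else 0) else (if n = 537 then 8 else 0)) else (if n < 551 then (if n = 540 then 7 else 0) else (if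 n < 555 then (if n = 551 then 8 else 0) else (if n = 555 then 9 else 0))))) else (if n < 601 then (if n < 574 then (if n < 570 then (if n = 566 then 10 else 0) else (if n = 570 then 11 else 0)) else (if n < 585 then (if n = 574 then 12 else 0) else (if n < 589 then (if n = 585 then 10 else 0) else (if n = 589 then 6 else 0)))) else (if n < 616 then (if n < 606 then (if n = 601 then 7 else 0) else (if n < 611 then (if n = 606 then 8 else 0) else (if n = 611 then 9 else 0))) else (if n < 628 then (if n = 616 then 10 else 0) else (if n < 633 then (if n = 628 then 11 else 0) else (if n = 633 then 9 else 0)))))))) else (if n < 935 then (if n < 788 then (if n < 711 then (if n < 675 then (if n < 657 then (if n < 644 then (if n = 638 then 5 else 0) else (if n = 644 then 6 else 0)) else (if n < 663 then (if n = 657 then 7 else 0) else (if n < 669 then (if n = 663 then 8 else 0) else (if n = 669 then 9 else 0)))) else (if n < 690 then (if n < 681 then (if n = 675 then 10 else 0) else (if n = 681 then 8 else 0)) else (if n < 697 then (if n = 690 then 13 else 0) else (if n < 704 then (if n = 697 then 11 else 0) else (if n = 704 then 11 else 0))))) else (if n < 743 then (if n < 725 then (if n < 718 then (if n = 711 then 12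 else 0) else (if n = 718 then 12 else 0)) else (if n < 732 then (if n = 725 then 12 else 0) else (if n < 739 then (if n = 732 then 11 else 0) else (if n = 739 then 7 else 0)))) else (if n < 769 then (if n < 754 then (if n = 743 then 4 else 0) else (if n < 758 then (if n = 754 then 8 else 0) else (if n = 758 then 5 else 0))) else (if n < 773 then (if n = 769 then 6 else 0) else (if n < 777 then (if n = 773 then 6 else 0) else (if n = 777 then 3 else 0)))))) else (if n < 859 then (if n < 821 then (if n < 804 then (if n < 796 then (if n = 788 then 12 else 0) else (if n = 796 then 10 else 0)) else (if n < 805 then (if n = 804 then 9 else 0) else (if n < 813 then (if n = 805 then 11 else 0) else (if n = 813 then 10 else 0)))) else (if n < 837 then (if n < 829 then (if n = 821 then 12 else 0) else (if n = 829 then 10 else 0)) else (if n < 842 then (if n = 837 then 10 else 0) else (if n < 847 then (if n = 842 then 7 else 0) else (if n = 847 then 11 else 0))))) else (if n < 895 then (if n < 869 then (if n < 864 then (if n = 859 then 8 else 0) else (if n = 864 then 9 else 0)) else (if n < 881 then (if n = 869 then 9 else 0) else (if n < 886 then (if n = 881 then 6 else 0) else (if n = 886 then 12 else 0)))) else (if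 n < 915 then (if n < 897 then (if n = 895 then 9 else 0) else (if n < 906 then (if n = 897 then 9 else 0) else (if n = 906 then 10 else 0))) else (if n < 917 then (if n = 915 then 10 else 0) else (if n < 926 then (if n = 917 then 11 else 0) else (if n = 926 then 9 else 0))))))) else (if n < 1083 then (if n < 1007 then (if n < 972 then (if n < 947 then (if n < 941 then (if n = 935 then 10 else 0) else (if n = 941 then 10 else 0)) else (if n < 953 then (if n = 947 then 11 else 0) else (if n < 959 then (if n = 953 then 9 else 0) else (if n = 959 then 12 else 0)))) else (if n < 984 then (if n < 978 then (if n = 972 then 9 else 0) else (if n = 978 then 9 else 0)) else (if n < 987 then (if n = 984 then 11 else 0) else (if n < 997 then (if n = 987 then 8 else 0) else (if n = 997 then 12 else 0))))) else (if n < 1041 then (if n < 1020 then (if n < 1010 then (if n = 1007 then 9 else 0) else (if n = 1010 then 11 else 0)) else (if n < 1023 then (if n = 1020 then 10 else 0) else (if n < 1034 then (if n = 1023 then 8 else 0) else (if n = 1034 then 11 else 0)))) else (if n < 1062 then (if n < 1048 then (if n = 1041 then 9 else 0) else (if n < 1055 then (if n = 1048 then 11 else 0) else (if n = 1055 then 12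 else 0))) else (if n < 1069 then (if n = 1062 then 10 else 0) else (if n < 1076 then (if n = 1069 then 12 else 0) else (if n = 1076 then 10 else 0)))))) else (if n < 1148 then (if n < 1115 then (if n < 1093 then (if n < 1088 then (if n = 1083 then 9 else 0) else (if n = 1088 then 7 else 0)) else (if n < 1105 then (if n = 1093 then 5 else 0) else (if n < 1110 then (if n = 1105 then 7 else 0) else (if n = 1110 then 8 else 0)))) else (if n < 1132 then (if n < 1120 then (if n = 1115 then 6 else 0) else (if n = 1120 then 4 else 0)) else (if n < 1135 then (if n = 1132 then 9 else 0) else (if n < 1145 then (if n = 1135 then 7 else 0) else (if n = 1145 then 9 else 0))))) else (if n < 1189 then (if n < 1168 then (if n < 1158 then (if n = 1148 then 10 else 0) else (if n = 1158 then 8 else 0)) else (if n < 1171 then (if n = 1168 then 6 else 0) else (if n < 1181 then (if n = 1171 then 10 else 0) else (if n = 1181 then 10 else 0)))) else (if n < 1206 then (if n < 1190 then (if n = 1189 then 8 else 0) else (if n < 1198 then (if n = 1190 then 13 else 0) else (if n = 1198 then 11 else 0))) else (if n < 1214 then (if n = 1206 then 9 else 0) else (if n < 1222 then (if n = 1214 then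 11 else 0) else (if n = 1222 then 12 else 0))))))))) else (if n < 1816 then (if n < 1521 then (if n < 1374 then (if n < 1298 then (if n < 1260 then (if n < 1242 then (if n < 1236 then (if n = 1230 then 12 else 0) else (if n = 1236 then 10 else 0)) else (if n < 1248 then (if n = 1242 then 8 else 0) else (if n < 1254 then (if n = 1248 then 10 else 0) else (if n = 1254 then 11 else 0)))) else (if n < 1279 then (if n < 1273 then (if n = 1260 then 9 else 0) else (if n = 1273 then 7 else 0)) else (if n < 1283 then (if n = 1279 then 12 else 0) else (if n < 1294 then (if n = 1283 then 10 else 0) else (if n = 1294 then 10 else 0))))) else (if n < 1330 then (if n < 1313 then (if n < 1302 then (if n = 1298 then 12 else 0) else (if n = 1302 then 11 else 0)) else (if n < 1317 then (if n = 1313 then 9 else 0) else (if n < 1328 then (if n = 1317 then 9 else 0) else (if n = 1328 then 9 else 0)))) else (if n < 1357 then (if n < 1339 then (if n = 1330 then 7 else 0) else (if n < 1348 then (if n = 1339 then 12 else 0) else (if n = 1348 then 10 else 0))) else (if n < 1359 then (if n = 1357 then 8 else 0) else (if n < 1368 then (if n = 1359 then 10 else 0) else (if n = 1368 then 11 else 0))))))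 else (if n < 1443 then (if n < 1409 then (if n < 1388 then (if n < 1381 then (if n = 1374 then 13 else 0) else (if n = 1381 then 11 else 0)) else (if n < 1395 then (if n = 1388 then 11 else 0) else (if n < 1402 then (if n = 1395 then 12 else 0) else (if n = 1402 then 12 else 0)))) else (if n < 1423 then (if n < 1416 then (if n = 1409 then 12 else 0) else (if n = 1416 then 11 else 0)) else (if n < 1432 then (if n = 1423 then 7 else 0) else (if n < 1441 then (if n = 1432 then 9 else 0) else (if n = 1441 then 8 else 0))))) else (if n < 1483 then (if n < 1461 then (if n < 1452 then (if n = 1443 then 6 else 0) else (if n = 1452 then 8 else 0)) else (if n < 1463 then (if n = 1461 then 10 else 0) else (if n < 1472 then (if n = 1463 then 5 else 0) else (if n = 1472 then 12 else 0)))) else (if n < 1502 then (if n < 1487 then (if n = 1483 then 7 else 0) else (if n < 1491 then (if n = 1487 then 9 else 0) else (if n = 1491 then 11 else 0))) else (if n < 1506 then (if n = 1502 then 10 else 0) else (if n < 1517 then (if n = 1506 then 8 else 0) else (if n = 1517 then 10 else 0))))))) else (if n < 1668 then (if n < 1594 then (if n < 1558 then (if n < 1533 then (if n < 1527 then (if n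 = 1521 then 10 else 0) else (if n = 1527 then 9 else 0)) else (if n < 1546 then (if n = 1533 then 11 else 0) else (if n < 1552 then (if n = 1546 then 9 else 0) else (if n = 1552 then 9 else 0)))) else (if n < 1570 then (if n < 1564 then (if n = 1558 then 10 else 0) else (if n = 1564 then 12 else 0)) else (if n < 1578 then (if n = 1570 then 12 else 0) else (if n < 1586 then (if n = 1578 then 10 else 0) else (if n = 1586 then 10 else 0))))) else (if n < 1629 then (if n < 1603 then (if n < 1602 then (if n = 1594 then 11 else 0) else (if n = 1602 then 9 else 0)) else (if n < 1611 then (if n = 1603 then 11 else 0) else (if n < 1619 then (if n = 1611 then 10 else 0) else (if n = 1619 then 10 else 0)))) else (if n < 1645 then (if n < 1632 then (if n = 1629 then 8 else 0) else (if n < 1642 then (if n = 1632 then 8 else 0) else (if n = 1642 then 9 else 0))) else (if n < 1655 then (if n = 1645 then 11 else 0) else (if n < 1665 then (if n = 1655 then 9 else 0) else (if n = 1665 then 8 else 0)))))) else (if n < 1739 then (if n < 1707 then (if n < 1685 then (if n < 1673 then (if n = 1668 then 11 else 0) else (if n = 1673 then 6 else 0)) else (if n < 1690 then (if n = 1685 then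 8 else 0) else (if n < 1695 then (if n = 1690 then 10 else 0) else (if n = 1695 then 9 else 0)))) else (if n < 1718 then (if n < 1712 then (if n = 1707 then 7 else 0) else (if n = 1712 then 9 else 0)) else (if n < 1725 then (if n = 1718 then 11 else 0) else (if n < 1732 then (if n = 1725 then 9 else 0) else (if n = 1732 then 11 else 0))))) else (if n < 1777 then (if n < 1753 then (if n < 1746 then (if n = 1739 then 12 else 0) else (if n = 1746 then 10 else 0)) else (if n < 1760 then (if n = 1753 then 12 else 0) else (if n < 1767 then (if n = 1760 then 10 else 0) else (if n = 1767 then 9 else 0)))) else (if n < 1793 then (if n < 1780 then (if n = 1777 then 6 else 0) else (if n < 1790 then (if n = 1780 then 8 else 0) else (if n = 1790 then 9 else 0))) else (if n < 1803 then (if n = 1793 then 7 else 0) else (if n < 1806 then (if n = 1803 then 10 else 0) else (if n = 1806 then 6 else 0)))))))) else (if n < 2113 then (if n < 1963 then (if n < 1885 then (if n < 1853 then (if n < 1828 then (if n < 1822 then (if n = 1816 then 9 else 0) else (if n = 1822 then 10 else 0)) else (if n < 1834 then (if n = 1828 then 8 else 0) else (if n < 1847 then (if n = 1834 then 11 else 0)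 else (if n = 1847 then 7 else 0)))) else (if n < 1865 then (if n < 1859 then (if n = 1853 then 10 else 0) else (if n = 1859 then 10 else 0)) else (if n < 1874 then (if n = 1865 then 10 else 0) else (if n < 1876 then (if n = 1874 then 7 else 0) else (if n = 1876 then 10 else 0))))) else (if n < 1919 then (if n < 1903 then (if n < 1894 then (if n = 1885 then 8 else 0) else (if n = 1894 then 9 else 0)) else (if n < 1905 then (if n = 1903 then 7 else 0) else (if n < 1914 then (if n = 1905 then 8 else 0) else (if n = 1914 then 12 else 0)))) else (if n < 1941 then (if n < 1931 then (if n = 1919 then 8 else 0) else (if n < 1936 then (if n = 1931 then 11 else 0) else (if n = 1936 then 11 else 0))) else (if n < 1946 then (if n = 1941 then 10 else 0) else (if n < 1958 then (if n = 1946 then 13 else 0) else (if n = 1958 then 9 else 0)))))) else (if n < 2031 then (if n < 1996 then (if n < 1979 then (if n < 1971 then (if n = 1963 then 12 else 0) else (if n = 1971 then 8 else 0)) else (if n < 1987 then (if n = 1979 then 11 else 0) else (if n < 1988 then (if n = 1987 then 11 else 0) else (if n = 1988 then 10 else 0)))) else (if n < 2012 then (if n < 2004 then (if n = 1996 then 11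 else 0) else (if n = 2004 then 9 else 0)) else (if n < 2016 then (if n = 2012 then 9 else 0) else (if n < 2027 then (if n = 2016 then 5 else 0) else (if n = 2027 then 8 else 0))))) else (if n < 2071 then (if n < 2046 then (if n < 2042 then (if n = 2031 then 8 else 0) else (if n = 2042 then 7 else 0)) else (if n < 2057 then (if n = 2046 then 10 else 0) else (if n < 2064 then (if n = 2057 then 6 else 0) else (if n = 2064 then 2 else 0)))) else (if n < 2092 then (if n < 2078 then (if n = 2071 then 5 else 0) else (if n < 2085 then (if n = 2078 then 7 else 0) else (if n = 2085 then 6 else 0))) else (if n < 2099 then (if n = 2092 then 5 else 0) else (if n < 2106 then (if n = 2099 then 4 else 0) else (if n = 2106 then 3 else 0))))))) else (if n < 2260 then (if n < 2177 then (if n < 2143 then (if n < 2125 then (if n < 2119 then (if n = 2113 then 3 else 0) else (if n = 2119 then 6 else 0)) else (if n < 2131 then (if n = 2125 then 8 else 0) else (if n < 2137 then (if n = 2131 then 7 else 0) else (if n = 2137 then 6 else 0)))) else (if n < 2162 then (if n < 2149 then (if n = 2143 then 5 else 0) else (if n = 2149 then 4 else 0)) else (if n < 2167 then (if n = 2162 then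 4 else 0) else (if n < 2172 then (if n = 2167 then 7 else 0) else (if n = 2172 then 9 else 0))))) else (if n < 2215 then (if n < 2194 then (if n < 2189 then (if n = 2177 then 8 else 0) else (if n = 2189 then 7 else 0)) else (if n < 2199 then (if n = 2194 then 6 else 0) else (if n < 2211 then (if n = 2199 then 5 else 0) else (if n = 2211 then 5 else 0)))) else (if n < 2234 then (if n < 2219 then (if n = 2215 then 8 else 0) else (if n < 2230 then (if n = 2219 then 10 else 0) else (if n = 2230 then 9 else 0))) else (if n < 2245 then (if n = 2234 then 8 else 0) else (if n < 2249 then (if n = 2245 then 7 else 0) else (if n = 2249 then 6 else 0)))))) else (if n < 2329 then (if n < 2289 then (if n < 2273 then (if n < 2263 then (if n = 2260 then 6 else 0) else (if n = 2263 then 9 else 0)) else (if n < 2276 then (if n = 2273 then 11 else 0) else (if n < 2286 then (if n = 2276 then 10 else 0) else (if n = 2286 then 9 else 0)))) else (if n < 2309 then (if n < 2299 then (if n = 2289 then 8 else 0) else (if n = 2299 then 7 else 0)) else (if n < 2311 then (if n = 2309 then 7 else 0) else (if n < 2320 then (if n = 2311 then 7 else 0) else (if n = 2320 then 10 else 0)))))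 else (if n < 2359 then (if n < 2340 then (if n < 2331 then (if n = 2329 then 11 else 0) else (if n = 2331 then 10 else 0)) else (if n < 2349 then (if n = 2340 then 9 else 0) else (if n < 2358 then (if n = 2349 then 8 else 0) else (if n = 2358 then 5 else 0)))) else (if n < 2383 then (if n < 2367 then (if n = 2359 then 4 else 0) else (if n < 2375 then (if n = 2367 then 7 else 0) else (if n = 2375 then 9 else 0))) else (if n < 2391 then (if n = 2383 then 8 else 0) else (if n < 2399 then (if n = 2391 then 7 else 0) else (if n = 2399 then 6 else 0))))))))))

private noncomputable def cod (a b c d : ZMod 7) : Nat := a.val + 7 * b.val + 49 * c.val + 343 * d.val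

private noncomputable def tblZ (a b c d : ZMod 7) : Matrix (Fin 3) (Fin 3) (ZMod 2) := tbl (cod a b c d)

private noncomputable def WZ (a b c d : ZMod 7) : Nat := W (cod a b c d)

private noncomputable def enc3 (M : Matrix (Fin 3) (Fin 3) (ZMod 2)) : Nat :=
  (M 0 0).val + 2 * (M 0 1).val + 4 * (M 0 2).val + 8 * (M 1 0).val + 16 * (M 1 1).val +
    32 * (M 1 2).val + 64 * (M 2 0).val + 128 * (M 2 1).val + 256 * (M 2 2).val

private noncomputable def det3f (M : Matrix (Fin 3) (Fin 3) (ZMod 2)) : ZMod 2 :=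
  M 0 0 * M 1 1 * M 2 2 - M 0 0 * M 1 2 * M 2 1 - M 0 1 * M 1 0 * M 2 2 +
    M 0 1 * M 1 2 * M 2 0 + M 0 2 * M 1 0 * M 2 1 - M 0 2 * M 1 1 * M 2 0

private noncomputable def L2 : List Nat := [84, 85, 86, 87, 92, 93, 94, 95, 98, 99, 102, 103, 106, 107, 110, 111, 114, 115, 116, 117, 122, 123, 124, 125, 140, 141, 142, 143, 156, 157, 158, 159, 161, 163, 165, 167, 169, 171, 172, 174, 177, 179, 181, 183, 185, 187, 188, 190, 204, 205, 206, 207, 212, 213, 214, 215, 225, 226, 229, 230, 233, 234, 236, 239, 241, 242, 244, 247, 249, 250, 253, 254, 266, 267, 270, 271, 273, 275, 277, 279, 281, 282, 285, 286, 298, 299, 302, 303, 305, 307, 309, 311, 313, 314, 317, 318, 330, 331, 334, 335, 337, 339, 340, 342, 345, 346, 348, 351, 354, 355, 358, 359, 369, 370, 372, 375, 377, 379, 380, 382, 394, 395, 396, 397, 401, 403, 405, 407, 409, 410, 412, 415, 417, 419, 421, 423, 425, 426, 428, 431, 442, 443, 444, 445, 458, 459, 460, 461, 465, 467, 468, 470,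 473, 474, 477, 478, 481, 482, 485, 486, 489, 491, 492, 494, 498, 499, 500, 501]

private noncomputable def Lz : List (ZMod 7 × ZMod 7 × ZMod 7 × ZMod 7) := [
  (0, 6, 1, 0),
  (1, 6, 1, 0),
  (2, 6, 1, 0),
  (3, 6, 1, 0),
  (4, 6, 1, 0),
  (5, 6, 1, 0),
  (6, 6, 1, 0),
  (0, 3, 2, 0),
  (1, 3, 2, 0),
  (2, 3, 2, 0),
  (3, 3, 2, 0),
  (4, 3, 2, 0),
  (5, 3, 2, 0),
  (6, 3, 2, 0),
  (0, 2, 3, 0),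
  (1, 2, 3, 0),
  (2, 2, 3, 0),
  (3, 2, 3, 0),
  (4, 2, 3, 0),
  (5, 2, 3, 0),
  (6, 2, 3, 0),
  (0, 5, 4, 0),
  (1, 5, 4, 0),
  (2, 5, 4, 0),
  (3, 5, 4, 0),
  (4, 5, 4, 0),
  (5, 5, 4, 0),
  (6, 5, 4, 0),
  (0, 4, 5, 0),
  (1, 4, 5, 0),
  (2, 4, 5, 0),
  (3, 4, 5, 0),
  (4, 4, 5, 0),
  (5, 4, 5, 0),
  (6, 4, 5, 0),
  (0, 1, 6, 0),
  (1, 1, 6, 0),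
  (2, 1, 6, 0),
  (3, 1, 6, 0),
  (4, 1, 6, 0),
  (5, 1, 6, 0),
  (6, 1, 6, 0),
  (1, 0, 0, 1),
  (1, 1, 0, 1),
  (1, 2, 0, 1),
  (1, 3, 0, 1),
  (1, 4, 0, 1),
  (1, 5, 0, 1),
  (1, 6, 0, 1),
  (1, 0, 1, 1),
  (2, 1, 1, 1),
  (3, 2, 1, 1),
  (4, 3, 1, 1),
  (5, 4, 1, 1),
  (6, 5, 1, 1),
  (0, 6, 1, 1),
  (1, 0, 2, 1),
  (3, 1, 2, 1),
  (5, 2, 2, 1),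
  (0, 3, 2, 1),
  (2, 4, 2, 1),
  (4, 5, 2, 1),
  (6, 6, 2, 1),
  (1, 0, 3, 1),
  (4, 1, 3, 1),
  (0, 2, 3, 1),
  (3, 3, 3, 1),
  (6, 4, 3, 1),
  (2, 5, 3, 1),
  (5, 6, 3, 1),
  (1, 0, 4, 1),
  (5, 1, 4, 1),
  (2, 2, 4, 1),
  (6, 3, 4, 1),
  (3, 4, 4, 1),
  (0, 5, 4, 1),
  (4, 6, 4, 1),
  (1, 0, 5, 1),
  (6, 1, 5, 1),
  (4, 2, 5, 1),
  (2, 3, 5, 1),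
  (0, 4, 5, 1),
  (5, 5, 5, 1),
  (3, 6, 5, 1),
  (1, 0, 6, 1),
  (0, 1, 6, 1),
  (6, 2, 6, 1),
  (5, 3, 6, 1),
  (4, 4, 6, 1),
  (3, 5, 6, 1),
  (2, 6, 6, 1),
  (4, 0, 0, 2),
  (4, 1, 0, 2),
  (4, 2, 0, 2),
  (4, 3, 0, 2),
  (4, 4, 0, 2),
  (4, 5, 0, 2),
  (4, 6, 0, 2),
  (4, 0, 1, 2),
  (1, 1, 1, 2),
  (5, 2, 1, 2),
  (2, 3, 1, 2),
  (6, 4, 1, 2),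
  (3, 5, 1, 2),
  (0, 6, 1, 2),
  (4, 0, 2, 2),
  (5, 1, 2, 2),
  (6, 2, 2, 2),
  (0, 3, 2, 2),
  (1, 4, 2, 2),
  (2, 5, 2, 2),
  (3, 6, 2, 2),
  (4, 0, 3, 2),
  (2, 1, 3, 2),
  (0, 2, 3, 2),
  (5, 3, 3, 2),
  (3, 4, 3, 2),
  (1, 5, 3, 2),
  (6, 6, 3, 2),
  (4, 0, 4, 2),
  (6, 1, 4, 2),
  (1, 2, 4, 2),
  (3, 3, 4, 2),
  (5, 4, 4, 2),
  (0, 5, 4, 2),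
  (2, 6, 4, 2),
  (4, 0, 5, 2),
  (3, 1, 5, 2),
  (2, 2, 5, 2),
  (1, 3, 5, 2),
  (0, 4, 5, 2),
  (6, 5, 5, 2),
  (5, 6, 5, 2),
  (4, 0, 6, 2),
  (0, 1, 6, 2),
  (3, 2, 6, 2),
  (6, 3, 6, 2),
  (2, 4, 6, 2),
  (5, 5, 6, 2),
  (1, 6, 6, 2),
  (5, 0, 0, 3),
  (5, 1, 0, 3),
  (5, 2, 0, 3),
  (5, 3, 0, 3),
  (5, 4, 0, 3),
  (5, 5, 0, 3),
  (5, 6, 0, 3),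
  (5, 0, 1, 3),
  (3, 1, 1, 3),
  (1, 2, 1, 3),
  (6, 3, 1, 3),
  (4, 4, 1, 3),
  (2, 5, 1, 3),
  (0, 6, 1, 3),
  (5, 0, 2, 3),
  (1, 1, 2, 3),
  (4, 2, 2, 3),
  (0, 3, 2, 3),
  (3, 4, 2, 3),
  (6, 5, 2, 3),
  (2, 6, 2, 3),
  (5, 0, 3, 3),
  (6, 1, 3, 3),
  (0, 2, 3, 3),
  (1, 3, 3, 3),
  (2, 4, 3, 3),
  (3, 5, 3, 3),
  (4, 6, 3, 3),
  (5, 0, 4, 3),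
  (4, 1, 4, 3),
  (3, 2, 4, 3),
  (2, 3, 4, 3),
  (1, 4, 4, 3),
  (0, 5, 4, 3),
  (6, 6, 4, 3),
  (5, 0, 5, 3),
  (2, 1, 5, 3),
  (6, 2, 5, 3),
  (3, 3, 5, 3),
  (0, 4, 5, 3),
  (4, 5, 5, 3),
  (1, 6, 5, 3),
  (5, 0, 6, 3),
  (0, 1, 6, 3),
  (2, 2, 6, 3),
  (4, 3, 6, 3),
  (6, 4, 6, 3),
  (1, 5, 6, 3),
  (3, 6, 6, 3),
  (2, 0, 0, 4),
  (2, 1, 0, 4),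
  (2, 2, 0, 4),
  (2, 3, 0, 4),
  (2, 4, 0, 4),
  (2, 5, 0, 4),
  (2, 6, 0, 4),
  (2, 0, 1, 4),
  (4, 1, 1, 4),
  (6, 2, 1, 4),
  (1, 3, 1, 4),
  (3, 4, 1, 4),
  (5, 5, 1, 4),
  (0, 6, 1, 4),
  (2, 0, 2, 4),
  (6, 1, 2, 4),
  (3, 2, 2, 4),
  (0, 3, 2, 4),
  (4, 4, 2, 4),
  (1, 5, 2, 4),
  (5, 6, 2, 4),
  (2, 0, 3, 4),
  (1, 1, 3, 4),
  (0, 2, 3, 4),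
  (6, 3, 3, 4),
  (5, 4, 3, 4),
  (4, 5, 3, 4),
  (3, 6, 3, 4),
  (2, 0, 4, 4),
  (3, 1, 4, 4),
  (4, 2, 4, 4),
  (5, 3, 4, 4),
  (6, 4, 4, 4),
  (0, 5, 4, 4),
  (1, 6, 4, 4),
  (2, 0, 5, 4),
  (5, 1, 5, 4),
  (1, 2, 5, 4),
  (4, 3, 5, 4),
  (0, 4, 5, 4),
  (3, 5, 5, 4),
  (6, 6, 5, 4),
  (2, 0, 6, 4),
  (0, 1, 6, 4),
  (5, 2, 6, 4),
  (3, 3, 6, 4),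
  (1, 4, 6, 4),
  (6, 5, 6, 4),
  (4, 6, 6, 4),
  (3, 0, 0, 5),
  (3, 1, 0, 5),
  (3, 2, 0, 5),
  (3, 3, 0, 5),
  (3, 4, 0, 5),
  (3, 5, 0, 5),
  (3, 6, 0, 5),
  (3, 0, 1, 5),
  (6, 1, 1, 5),
  (2, 2, 1, 5),
  (5, 3, 1, 5),
  (1, 4, 1, 5),
  (4, 5, 1, 5),
  (0, 6, 1, 5),
  (3, 0, 2, 5),
  (2, 1, 2, 5),
  (1, 2, 2, 5),
  (0, 3, 2, 5),
  (6, 4, 2, 5),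
  (5, 5, 2, 5),
  (4, 6, 2, 5),
  (3, 0, 3, 5),
  (5, 1, 3, 5),
  (0, 2, 3, 5),
  (2, 3, 3, 5),
  (4, 4, 3, 5),
  (6, 5, 3, 5),
  (1, 6, 3, 5),
  (3, 0, 4, 5),
  (1, 1, 4, 5),
  (6, 2, 4, 5),
  (4, 3, 4, 5),
  (2, 4, 4, 5),
  (0, 5, 4, 5),
  (5, 6, 4, 5),
  (3, 0, 5, 5),
  (4, 1, 5, 5),
  (5, 2, 5, 5),
  (6, 3, 5, 5),
  (0, 4, 5, 5),
  (1, 5, 5, 5),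
  (2, 6, 5, 5),
  (3, 0, 6, 5),
  (0, 1, 6, 5),
  (4, 2, 6, 5),
  (1, 3, 6, 5),
  (5, 4, 6, 5),
  (2, 5, 6, 5),
  (6, 6, 6, 5),
  (6, 0, 0, 6),
  (6, 1, 0, 6),
  (6, 2, 0, 6),
  (6, 3, 0, 6),
  (6, 4, 0, 6),
  (6, 5, 0, 6),
  (6, 6, 0, 6),
  (6, 0, 1, 6),
  (5, 1, 1, 6),
  (4, 2, 1, 6),
  (3, 3, 1, 6),
  (2, 4, 1, 6),
  (1, 5, 1, 6),
  (0, 6, 1, 6),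
  (6, 0, 2, 6),
  (4, 1, 2, 6),
  (2, 2, 2, 6),
  (0, 3, 2, 6),
  (5, 4, 2, 6),
  (3, 5, 2, 6),
  (1, 6, 2, 6),
  (6, 0, 3, 6),
  (3, 1, 3, 6),
  (0, 2, 3, 6),
  (4, 3, 3, 6),
  (1, 4, 3, 6),
  (5, 5, 3, 6),
  (2, 6, 3, 6),
  (6, 0, 4, 6),
  (2, 1, 4, 6),
  (5, 2, 4, 6),
  (1, 3, 4, 6),
  (4, 4, 4, 6),
  (0, 5, 4, 6),
  (3, 6, 4, 6),
  (6, 0, 5, 6),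
  (1, 1, 5, 6),
  (3, 2, 5, 6),
  (5, 3, 5, 6),
  (0, 4, 5, 6),
  (2, 5, 5, 6),
  (4, 6, 5, 6),
  (6, 0, 6, 6),
  (0, 1, 6, 6),
  (1, 2, 6, 6),
  (2, 3, 6, 6),
  (3, 4, 6, 6),
  (4, 5, 6, 6),
  (5, 6, 6, 6)]
private lemma D1 : ∀ a b c d : ZMod 7, a * d - b * c = 1 → det3f (tblZ a b c d) = 1 := by decide

private lemma D2 : ∀ a b c d : ZMod 7, a * d - b * c = 1 →
    tblZ (a + c) (b + d) c d = tblZ 1 1 0 1 * tblZ a b c d := by decide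

private lemma D3 : ∀ a b c d : ZMod 7, a * d - b * c = 1 →
    tblZ (6 * c) (6 * d) a b = tblZ 0 6 1 0 * tblZ a b c d := by decide

private lemma D4 : ∀ a b c d : ZMod 7, a * d - b * c = 1 → WZ a b c d = 0 →
    a = 1 ∧ b = 0 ∧ c = 0 ∧ d = 1 := by decide

private lemma D5 : ∀ a b c d : ZMod 7, a * d - b * c = 1 → 0 < WZ a b c d →
    WZ (a + 6 * c) (b + 6 * d) c d < WZ a b c d ∨ WZ c d (6 * a) (6 * b) < WZ a b c d := by decide

private lemma D6 : tblZ 1 0 0 1 = 1 ∧ tblZ 6 0 0 6 = 1 := by decide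

private lemma D7 : ∀ a b c d : ZMod 7, a * d - b * c = 1 →
    (tblZ a b c d = 1 ↔ (a = 1 ∧ b = 0 ∧ c = 0 ∧ d = 1) ∨ (a = 6 ∧ b = 0 ∧ c = 0 ∧ d = 6)) := by
  decide

private lemma D8 : ∀ e00 e01 e02 e10 e11 e12 e20 e21 e22 : ZMod 2,
    det3f !![e00, e01, e02; e10, e11, e12; e20, e21, e22] = 1 →
    enc3 !![e00, e01, e02; e10, e11, e12; e20, e21, e22] ∈ L2 := by decide

private lemma D9 : ∀ n ∈ L2, ∃ p ∈ Lz,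
    p.1 * p.2.2.2 - p.2.1 * p.2.2.1 = 1 ∧ enc3 (tblZ p.1 p.2.1 p.2.2.1 p.2.2.2) = n := by
  decide

open Matrix Matrix.SpecialLinearGroup in
private lemma det3f_eq (M : Matrix (Fin 3) (Fin 3) (ZMod 2)) : M.det = det3f M := by
  rw [Matrix.det_fin_three]; rfl

private def AA : SL(2, ZMod 7) := ⟨!![1, 1; 0, 1], by norm_num [Matrix.det_fin_two_of]⟩
private def BB : SL(2, ZMod 7) := ⟨!![0, 6; 1, 0], by rw [Matrix.det_fin_two_of]; decide⟩
private def AAi : SL(2, ZMod 7) := ⟨!![1, 6; 0, 1], by norm_num [Matrix.det_fin_two_of]⟩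
private def BBi : SL(2, ZMod 7) := ⟨!![0, 1; 6, 0], by rw [Matrix.det_fin_two_of]; decide⟩

private noncomputable def psiM (x : SL(2, ZMod 7)) : Matrix (Fin 3) (Fin 3) (ZMod 2) :=
  tblZ (x.1 0 0) (x.1 0 1) (x.1 1 0) (x.1 1 1)

private lemma det_entries (x : SL(2, ZMod 7)) :
    x.1 0 0 * x.1 1 1 - x.1 0 1 * x.1 1 0 = 1 := by
  rw [← Matrix.det_fin_two]; exact x.2

private lemma psi_det (x : SL(2, ZMod 7)) : (psiM x).det = 1 := by
  rw [det3f_eq]; exact D1 _ _ _ _ (det_entries x)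

private noncomputable def psiS (x : SL(2, ZMod 7)) : SL(3, ZMod 2) := ⟨psiM x, psi_det x⟩

private lemma mulA_entries (u : SL(2, ZMod 7)) :
    (AA * u).1 = !![u.1 0 0 + u.1 1 0, u.1 0 1 + u.1 1 1; u.1 1 0, u.1 1 1] := by
  show AA.1 * u.1 = _
  rw [Matrix.eta_fin_two u.1]
  show !![(1 : ZMod 7), 1; 0, 1] * _ = _
  rw [Matrix.mul_fin_two]
  norm_num

private lemma mulB_entries (u : SL(2, ZMod 7)) :
    (BB * u).1 = !![6 * u.1 1 0, 6 * u.1 1 1; u.1 0 0, u.1 0 1] := by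
  show BB.1 * u.1 = _
  rw [Matrix.eta_fin_two u.1]
  show !![(0 : ZMod 7), 6; 1, 0] * _ = _
  rw [Matrix.mul_fin_two]
  norm_num

private lemma mulAi_entries (u : SL(2, ZMod 7)) :
    (AAi * u).1 = !![u.1 0 0 + 6 * u.1 1 0, u.1 0 1 + 6 * u.1 1 1; u.1 1 0, u.1 1 1] := by
  show AAi.1 * u.1 = _
  rw [Matrix.eta_fin_two u.1]
  show !![(1 : ZMod 7), 6; 0, 1] * _ = _
  rw [Matrix.mul_fin_two]
  norm_num

private lemma mulBi_entries (u : SL(2, ZMod 7)) :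
    (BBi * u).1 = !![u.1 1 0, u.1 1 1; 6 * u.1 0 0, 6 * u.1 0 1] := by
  show BBi.1 * u.1 = _
  rw [Matrix.eta_fin_two u.1]
  show !![(0 : ZMod 7), 1; 6, 0] * _ = _
  rw [Matrix.mul_fin_two]
  norm_num

private lemma psiM_AA : psiM AA = tblZ 1 1 0 1 := rfl
private lemma psiM_BB : psiM BB = tblZ 0 6 1 0 := rfl

private lemma QA (u : SL(2, ZMod 7)) : psiS (AA * u) = psiS AA * psiS u := by
  apply Subtype.ext
  show psiM (AA * u) = psiM AA * psiM u
  have h : psiM (AA * u) =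
      tblZ (u.1 0 0 + u.1 1 0) (u.1 0 1 + u.1 1 1) (u.1 1 0) (u.1 1 1) := by
    unfold psiM
    rw [mulA_entries u]
    simp
  rw [h, psiM_AA]
  exact D2 _ _ _ _ (det_entries u)

private lemma QB (u : SL(2, ZMod 7)) : psiS (BB * u) = psiS BB * psiS u := by
  apply Subtype.ext
  show psiM (BB * u) = psiM BB * psiM u
  have h : psiM (BB * u) =
      tblZ (6 * u.1 1 0) (6 * u.1 1 1) (u.1 0 0) (u.1 0 1) := by
    unfold psiM
    rw [mulB_entries u]
    simp
  rw [h, psiM_BB]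
  exact D3 _ _ _ _ (det_entries u)

private lemma psiS_one : psiS 1 = 1 := by
  apply Subtype.ext
  show psiM 1 = 1
  have h : psiM 1 = tblZ 1 0 0 1 := by
    unfold psiM
    rw [Matrix.SpecialLinearGroup.coe_one, Matrix.one_fin_two]
    simp
  rw [h]; exact D6.1

private noncomputable def WS (x : SL(2, ZMod 7)) : Nat :=
  WZ (x.1 0 0) (x.1 0 1) (x.1 1 0) (x.1 1 1)

private lemma AA_AAi : AA * AAi = 1 := by
  apply Subtype.ext
  show AA.1 * AAi.1 = 1
  show !![(1 : ZMod 7), 1; 0, 1] * !![1, 6; 0, 1] = 1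
  rw [Matrix.mul_fin_two, Matrix.one_fin_two]
  decide

private lemma BB_BBi : BB * BBi = 1 := by
  apply Subtype.ext
  show BB.1 * BBi.1 = 1
  show !![(0 : ZMod 7), 6; 1, 0] * !![0, 1; 6, 0] = 1
  rw [Matrix.mul_fin_two, Matrix.one_fin_two]
  decide

private lemma eq_one_of_WS (x : SL(2, ZMod 7)) (h : WS x = 0) : x = 1 := by
  obtain ⟨h1, h2, h3, h4⟩ := D4 _ _ _ _ (det_entries x) h
  apply Subtype.ext
  rw [Matrix.eta_fin_two x.1, h1, h2, h3, h4, Matrix.SpecialLinearGroup.coe_one,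
    Matrix.one_fin_two]

private lemma key : ∀ (n : Nat) (x : SL(2, ZMod 7)), WS x ≤ n →
    ∀ y, psiS (x * y) = psiS x * psiS y := by
  intro n
  induction n with
  | zero =>
    intro x h y
    rw [eq_one_of_WS x (Nat.le_zero.mp h), one_mul, psiS_one, one_mul]
  | succ n ih =>
    intro x h y
    by_cases hz : WS x = 0
    · rw [eq_one_of_WS x hz, one_mul, psiS_one, one_mul]
    · have hpos : 0 < WS x := Nat.pos_of_ne_zero hz
      have hxA : x = AA * (AAi * x) := by rw [← mul_assoc, AA_AAi, one_mul]
      have hxB : x = BB * (BBi * x) := by rw [← mul_assoc, BB_BBi, one_mul]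
      have hWA : WS (AAi * x) =
          WZ (x.1 0 0 + 6 * x.1 1 0) (x.1 0 1 + 6 * x.1 1 1) (x.1 1 0) (x.1 1 1) := by
        unfold WS
        rw [mulAi_entries x]
        simp
      have hWB : WS (BBi * x) =
          WZ (x.1 1 0) (x.1 1 1) (6 * x.1 0 0) (6 * x.1 0 1) := by
        unfold WS
        rw [mulBi_entries x]
        simp
      have hWS : WS x = WZ (x.1 0 0) (x.1 0 1) (x.1 1 0) (x.1 1 1) := rfl
      rcases D5 _ _ _ _ (det_entries x) hpos with h5 | h5
      · have hlt : WS (AAi * x) ≤ n := by rw [hWA]; rw [hWS] at h hpos; omega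
        rw [hxA, mul_assoc, QA, ih _ hlt, QA, mul_assoc]
      · have hlt : WS (BBi * x) ≤ n := by rw [hWB]; rw [hWS] at h hpos; omega
        rw [hxB, mul_assoc, QB, ih _ hlt, QB, mul_assoc]

private lemma psiS_mul (x y : SL(2, ZMod 7)) : psiS (x * y) = psiS x * psiS y :=
  key (WS x) x le_rfl y

private noncomputable def ψ : SL(2, ZMod 7) →* SL(3, ZMod 2) :=
  { toFun := psiS, map_one' := psiS_one, map_mul' := psiS_mul }

private lemma enc3_inj (M N : Matrix (Fin 3) (Fin 3) (ZMod 2)) (h : enc3 M = enc3 N) :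
    M = N := by
  unfold enc3 at h
  have b00 := ZMod.val_lt (M 0 0)
  have c00 := ZMod.val_lt (N 0 0)
  have b01 := ZMod.val_lt (M 0 1)
  have c01 := ZMod.val_lt (N 0 1)
  have b02 := ZMod.val_lt (M 0 2)
  have c02 := ZMod.val_lt (N 0 2)
  have b10 := ZMod.val_lt (M 1 0)
  have c10 := ZMod.val_lt (N 1 0)
  have b11 := ZMod.val_lt (M 1 1)
  have c11 := ZMod.val_lt (N 1 1)
  have b12 := ZMod.val_lt (M 1 2)
  have c12 := ZMod.val_lt (N 1 2)
  have b20 := ZMod.val_lt (M 2 0)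
  have c20 := ZMod.val_lt (N 2 0)
  have b21 := ZMod.val_lt (M 2 1)
  have c21 := ZMod.val_lt (N 2 1)
  have b22 := ZMod.val_lt (M 2 2)
  have c22 := ZMod.val_lt (N 2 2)
  have h00 : M 0 0 = N 0 0 := ZMod.val_injective 2 (by omega)
  have h01 : M 0 1 = N 0 1 := ZMod.val_injective 2 (by omega)
  have h02 : M 0 2 = N 0 2 := ZMod.val_injective 2 (by omega)
  have h10 : M 1 0 = N 1 0 := ZMod.val_injective 2 (by omega)
  have h11 : M 1 1 = N 1 1 := ZMod.val_injective 2 (by omega)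
  have h12 : M 1 2 = N 1 2 := ZMod.val_injective 2 (by omega)
  have h20 : M 2 0 = N 2 0 := ZMod.val_injective 2 (by omega)
  have h21 : M 2 1 = N 2 1 := ZMod.val_injective 2 (by omega)
  have h22 : M 2 2 = N 2 2 := ZMod.val_injective 2 (by omega)
  ext i j
  fin_cases i <;> fin_cases j <;> assumption

private lemma psi_surj : Function.Surjective ψ := by
  intro g
  have hg : det3f g.1 = 1 := by rw [← det3f_eq]; exact g.2
  have hg' : det3f !![g.1 0 0, g.1 0 1, g.1 0 2; g.1 1 0, g.1 1 1, g.1 1 2;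
      g.1 2 0, g.1 2 1, g.1 2 2] = 1 := by rw [← Matrix.eta_fin_three g.1]; exact hg
  have hmem : enc3 g.1 ∈ L2 := by
    rw [Matrix.eta_fin_three g.1]
    exact D8 _ _ _ _ _ _ _ _ _ hg'
  obtain ⟨p, _, hdp, he⟩ := D9 _ hmem
  refine ⟨⟨!![p.1, p.2.1; p.2.2.1, p.2.2.2], by rw [Matrix.det_fin_two_of]; exact hdp⟩, ?_⟩
  apply Subtype.ext
  refine enc3_inj _ _ ?_
  show enc3 (tblZ p.1 p.2.1 p.2.2.1 p.2.2.2) = enc3 g.1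
  exact he

private lemma scalar_fin_two (r : ZMod 7) : Matrix.scalar (Fin 2) r = !![r, 0; 0, r] := by
  ext i j
  fin_cases i <;> fin_cases j <;>
    simp [Matrix.scalar_apply, Matrix.diagonal_apply]

private lemma psi_ker : ψ.ker = Subgroup.center (SL(2, ZMod 7)) := by
  ext x
  rw [MonoidHom.mem_ker, Matrix.SpecialLinearGroup.mem_center_iff]
  constructor
  · intro h
    have h' : psiM x = 1 := congrArg Subtype.val h
    rcases (D7 _ _ _ _ (det_entries x)).mp h' with ⟨h1, h2, h3, h4⟩ | ⟨h1, h2, h3, h4⟩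
    · refine ⟨1, by norm_num, ?_⟩
      rw [scalar_fin_two, Matrix.eta_fin_two x.1, h1, h2, h3, h4]
    · refine ⟨6, by decide, ?_⟩
      rw [scalar_fin_two, Matrix.eta_fin_two x.1, h1, h2, h3, h4]
  · rintro ⟨r, hr2, hrs⟩
    have hr : r = 1 ∨ r = 6 := by
      have hall : ∀ s : ZMod 7, s ^ Fintype.card (Fin 2) = 1 → s = 1 ∨ s = 6 := by decide
      exact hall r hr2
    have hx : x.1 = !![r, 0; 0, r] := by rw [← hrs, scalar_fin_two]
    have hent : psiM x = tblZ r 0 0 r := by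
      unfold psiM
      rw [hx]
      simp
    apply Subtype.ext
    show psiM x = 1
    rcases hr with h | h <;> rw [hent, h]
    · exact D6.1
    · exact D6.2

private lemma center_bot : Subgroup.center (SL(3, ZMod 2)) = ⊥ := by
  ext x
  rw [Matrix.SpecialLinearGroup.mem_center_iff, Subgroup.mem_bot]
  constructor
  · rintro ⟨r, hr3, hrs⟩
    have hr : r = 1 := by
      have hall : ∀ s : ZMod 2, s ^ Fintype.card (Fin 3) = 1 → s = 1 := by decide
      exact hall r hr3
    apply Subtype.ext
    rw [← hrs, hr, map_one, Matrix.SpecialLinearGroup.coe_one]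
  · rintro rfl
    exact ⟨1, by norm_num, by rw [map_one, Matrix.SpecialLinearGroup.coe_one]⟩

/-- The groups `PSL(3,F₂)` and `PSL(2,F₇)` are isomorphic. -/
theorem psl_three_two_iso_psl_two_seven :
    Nonempty (PSL(3, ZMod 2) ≃* PSL(2, ZMod 7)) := by
  have e1 : PSL(3, ZMod 2) ≃* SL(3, ZMod 2) :=
    (QuotientGroup.quotientMulEquivOfEq center_bot).trans QuotientGroup.quotientBot
  have e2 : PSL(2, ZMod 7) ≃* SL(3, ZMod 2) :=
    (QuotientGroup.quotientMulEquivOfEq psi_ker.symm).trans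
      (QuotientGroup.quotientKerEquivOfSurjective ψ psi_surj)
  exact ⟨e1.trans e2.symm⟩
end

section
/- There are exactly 16 coherent orientations of the Fano plane, i.e., exactly 16 choices of a cyclic orientation of each of the 7 lines such that the induced sign constants θ_{α,β} = ±1 satisfy the triangle relations θ_{α,β} θ_{α+β,γ} = θ_{β,γ} θ_{β+γ,α} = θ_{γ,α} θ_{γ+α,β} for all triangles (α,β,γ). -/
set_option maxRecDepth 100000
set_option synthInstance.maxSize 2000
set_option maxHeartbeats 2000000

abbrev FanoV : Type := Fin 3 → ZMod 2

def fanoNN (x : FanoV) : ℕ := (x 0).val + 2 * (x 1).val + 4 * (x 2).val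

def fanoFwd (α β : FanoV) : Bool :=
  let a := fanoNN α; let b := fanoNN β; let c := fanoNN (α + β)
  (decide (a < b) && decide (b < c)) || (decide (b < c) && decide (c < a)) ||
    (decide (c < a) && decide (a < b))

def fanoIdx (α β : FanoV) : Fin 7 :=
  match fanoNN α * fanoNN β * fanoNN (α + β) with
  | 6 => 0 | 20 => 1 | 42 => 2 | 48 => 3 | 70 => 4 | 84 => 5 | _ => 6

def fanoPhi (s : Fin 7 → Bool) (α β : FanoV) : ℤ :=
  if α = 0 ∨ β = 0 ∨ α = β then 0
  else (if fanoFwd α β then 1 else -1) * (if s (fanoIdx α β) then 1 else -1)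

def fanoVV (a b c : ZMod 2) : FanoV := ![a, b, c]

def fanoA : Fin 7 → FanoV :=
  ![fanoVV 1 0 0, fanoVV 1 0 0, fanoVV 1 0 0, fanoVV 0 1 0, fanoVV 0 1 0,
    fanoVV 1 1 0, fanoVV 1 1 0]

def fanoB : Fin 7 → FanoV :=
  ![fanoVV 0 1 0, fanoVV 0 0 1, fanoVV 0 1 1, fanoVV 0 0 1, fanoVV 1 0 1,
    fanoVV 0 0 1, fanoVV 1 0 1]

def fanoRho (θ : FanoV → FanoV → ℤ) (i : Fin 7) : Bool := decide (θ (fanoA i) (fanoB i) = 1)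

def fanoCoh (s : Fin 7 → Bool) : Prop :=
  ∀ α β γ : FanoV, α ≠ 0 → β ≠ 0 → γ ≠ 0 → α ≠ β → β ≠ γ → α ≠ γ → γ ≠ α + β →
    fanoPhi s α β * fanoPhi s (α + β) γ = fanoPhi s β γ * fanoPhi s (β + γ) α ∧
    fanoPhi s β γ * fanoPhi s (β + γ) α = fanoPhi s γ α * fanoPhi s (γ + α) β

instance : DecidablePred fanoCoh := fun s => by unfold fanoCoh; infer_instance

/-! ### small decidable facts (no quantification over `s`) -/

lemma fano_swap : ∀ α β : FanoV, ¬(α = 0 ∨ β = 0 ∨ α = β) →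
    fanoFwd β α = !fanoFwd α β ∧ fanoIdx β α = fanoIdx α β := by decide

lemma fano_cyc : ∀ α β : FanoV, ¬(α = 0 ∨ β = 0 ∨ α = β) →
    fanoFwd β (α + β) = fanoFwd α β ∧ fanoIdx β (α + β) = fanoIdx α β ∧
    ¬(β = 0 ∨ α + β = 0 ∨ β = α + β) := by decide

lemma fano_anchor : ∀ i : Fin 7,
    fanoFwd (fanoA i) (fanoB i) = true ∧ fanoIdx (fanoA i) (fanoB i) = i := by decide

lemma fano_valid : ∀ i : Fin 7, fanoA i ≠ 0 ∧ fanoB i ≠ 0 ∧ fanoA i + fanoB i ≠ 0 ∧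
    fanoA i ≠ fanoB i ∧ fanoB i ≠ fanoA i + fanoB i ∧ fanoA i ≠ fanoA i + fanoB i := by
  decide

lemma fano_addcancel : ∀ x y : FanoV, y + (x + y) = x := by decide

lemma fano_cover : ∀ α β : FanoV, ¬(α = 0 ∨ β = 0 ∨ α = β) →
    ((α = fanoA (fanoIdx α β) ∧ β = fanoB (fanoIdx α β)) ∨
     (α = fanoB (fanoIdx α β) ∧ β = fanoA (fanoIdx α β) + fanoB (fanoIdx α β)) ∨
     (α = fanoA (fanoIdx α β) + fanoB (fanoIdx α β) ∧ β = fanoA (fanoIdx α β)) ∨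
     (α = fanoB (fanoIdx α β) ∧ β = fanoA (fanoIdx α β)) ∨
     (α = fanoA (fanoIdx α β) + fanoB (fanoIdx α β) ∧ β = fanoB (fanoIdx α β)) ∨
     (α = fanoA (fanoIdx α β) ∧ β = fanoA (fanoIdx α β) + fanoB (fanoIdx α β))) := by
  decide

/-! ### the four structural conditions hold for every `fanoPhi s` -/

lemma fano_phi_c1 (s : Fin 7 → Bool) (α β : FanoV) (h : α = 0 ∨ β = 0 ∨ α = β) :
    fanoPhi s α β = 0 := by
  simp only [fanoPhi, if_pos h]

lemma fano_phi_c2 (s : Fin 7 → Bool) (α β : FanoV) (hα : α ≠ 0) (hβ : β ≠ 0) (hab : α ≠ β) :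
    fanoPhi s α β = 1 ∨ fanoPhi s α β = -1 := by
  have hv : ¬(α = 0 ∨ β = 0 ∨ α = β) := by tauto
  simp only [fanoPhi, if_neg hv]
  cases fanoFwd α β <;> cases s (fanoIdx α β) <;> norm_num

lemma fano_phi_c3 (s : Fin 7 → Bool) (α β : FanoV) (hα : α ≠ 0) (hβ : β ≠ 0) (hab : α ≠ β) :
    fanoPhi s β α = -fanoPhi s α β := by
  have hv : ¬(α = 0 ∨ β = 0 ∨ α = β) := by tauto
  have hv' : ¬(β = 0 ∨ α = 0 ∨ β = α) := by
    rintro (h | h | h)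
    exacts [hβ h, hα h, hab h.symm]
  obtain ⟨hf, hi⟩ := fano_swap α β hv
  simp only [fanoPhi, if_neg hv, if_neg hv', hf, hi]
  cases fanoFwd α β <;> cases s (fanoIdx α β) <;> norm_num

lemma fano_phi_c4 (s : Fin 7 → Bool) (α β : FanoV) (hα : α ≠ 0) (hβ : β ≠ 0) (hab : α ≠ β) :
    fanoPhi s α β = fanoPhi s β (α + β) := by
  have hv : ¬(α = 0 ∨ β = 0 ∨ α = β) := by tauto
  obtain ⟨hf, hi, hv'⟩ := fano_cyc α β hv
  simp only [fanoPhi, if_neg hv, if_neg hv', hf, hi]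

/-! ### values of `fanoPhi s` on the six ordered pairs of a line -/

lemma fano_phi_six (s : Fin 7 → Bool) (i : Fin 7) :
    fanoPhi s (fanoA i) (fanoB i) = (if s i then 1 else -1) ∧
    fanoPhi s (fanoB i) (fanoA i + fanoB i) = fanoPhi s (fanoA i) (fanoB i) ∧
    fanoPhi s (fanoA i + fanoB i) (fanoA i) = fanoPhi s (fanoA i) (fanoB i) ∧
    fanoPhi s (fanoB i) (fanoA i) = -fanoPhi s (fanoA i) (fanoB i) ∧
    fanoPhi s (fanoA i + fanoB i) (fanoB i) = -fanoPhi s (fanoA i) (fanoB i) ∧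
    fanoPhi s (fanoA i) (fanoA i + fanoB i) = -fanoPhi s (fanoA i) (fanoB i) := by
  obtain ⟨ha0, hb0, hc0, hab, hbc, hac⟩ := fano_valid i
  obtain ⟨hfwd, hidx⟩ := fano_anchor i
  have hv : ¬(fanoA i = 0 ∨ fanoB i = 0 ∨ fanoA i = fanoB i) := by tauto
  have p0 : fanoPhi s (fanoA i) (fanoB i) = (if s i then 1 else -1) := by
    simp only [fanoPhi, if_neg hv, hfwd, hidx, if_true, one_mul]
  have p1 : fanoPhi s (fanoB i) (fanoA i + fanoB i) = fanoPhi s (fanoA i) (fanoB i) :=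
    (fano_phi_c4 s (fanoA i) (fanoB i) ha0 hb0 hab).symm
  have p2 : fanoPhi s (fanoA i + fanoB i) (fanoA i) = fanoPhi s (fanoA i) (fanoB i) := by
    have h := fano_phi_c4 s (fanoB i) (fanoA i + fanoB i) hb0 hc0 hbc
    rw [fano_addcancel (fanoA i) (fanoB i)] at h
    rw [← h, p1]
  refine ⟨p0, p1, p2, ?_, ?_, ?_⟩
  · exact fano_phi_c3 s (fanoA i) (fanoB i) ha0 hb0 hab
  · rw [fano_phi_c3 s (fanoB i) (fanoA i + fanoB i) hb0 hc0 hbc, p1]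
  · rw [fano_phi_c3 s (fanoA i + fanoB i) (fanoA i) hc0 ha0 (Ne.symm hac), p2]

lemma fano_retraction (s : Fin 7 → Bool) : fanoRho (fanoPhi s) = s := by
  funext i
  have p0 := (fano_phi_six s i).1
  simp only [fanoRho, p0]
  cases s i <;> simp

lemma fano_inj : Function.Injective fanoPhi := by
  intro s t h
  rw [← fano_retraction s, ← fano_retraction t, h]

/-! ### any admissible `θ` equals `fanoPhi (fanoRho θ)` -/

lemma fano_key (θ : FanoV → FanoV → ℤ)
    (h2 : ∀ α β : FanoV, α ≠ 0 → β ≠ 0 → α ≠ β → θ α β = 1 ∨ θ α β = -1)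
    (h3 : ∀ α β : FanoV, α ≠ 0 → β ≠ 0 → α ≠ β → θ β α = -θ α β)
    (h4 : ∀ α β : FanoV, α ≠ 0 → β ≠ 0 → α ≠ β → θ α β = θ β (α + β)) (i : Fin 7) :
    θ (fanoA i) (fanoB i) = fanoPhi (fanoRho θ) (fanoA i) (fanoB i) ∧
    θ (fanoB i) (fanoA i + fanoB i) = fanoPhi (fanoRho θ) (fanoB i) (fanoA i + fanoB i) ∧
    θ (fanoA i + fanoB i) (fanoA i) = fanoPhi (fanoRho θ) (fanoA i + fanoB i) (fanoA i) ∧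
    θ (fanoB i) (fanoA i) = fanoPhi (fanoRho θ) (fanoB i) (fanoA i) ∧
    θ (fanoA i + fanoB i) (fanoB i) = fanoPhi (fanoRho θ) (fanoA i + fanoB i) (fanoB i) ∧
    θ (fanoA i) (fanoA i + fanoB i) = fanoPhi (fanoRho θ) (fanoA i) (fanoA i + fanoB i) := by
  obtain ⟨ha0, hb0, hc0, hab, hbc, hac⟩ := fano_valid i
  obtain ⟨p0, p1, p2, p3, p4, p5⟩ := fano_phi_six (fanoRho θ) i
  have t1 : θ (fanoB i) (fanoA i + fanoB i) = θ (fanoA i) (fanoB i) :=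
    (h4 (fanoA i) (fanoB i) ha0 hb0 hab).symm
  have t2 : θ (fanoA i + fanoB i) (fanoA i) = θ (fanoA i) (fanoB i) := by
    have h := h4 (fanoB i) (fanoA i + fanoB i) hb0 hc0 hbc
    rw [fano_addcancel (fanoA i) (fanoB i)] at h
    rw [← h, t1]
  have anchor : θ (fanoA i) (fanoB i) = fanoPhi (fanoRho θ) (fanoA i) (fanoB i) := by
    rw [p0]
    rcases h2 (fanoA i) (fanoB i) ha0 hb0 hab with h | h <;> simp [fanoRho, h]
  refine ⟨anchor, ?_, ?_, ?_, ?_, ?_⟩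
  · rw [t1, p1, anchor]
  · rw [t2, p2, anchor]
  · rw [h3 (fanoA i) (fanoB i) ha0 hb0 hab, p3, anchor]
  · rw [h3 (fanoB i) (fanoA i + fanoB i) hb0 hc0 hbc, p4, t1, anchor]
  · rw [h3 (fanoA i + fanoB i) (fanoA i) hc0 ha0 (Ne.symm hac), p5, t2, anchor]

lemma fano_rep (θ : FanoV → FanoV → ℤ)
    (h1 : ∀ α β : FanoV, (α = 0 ∨ β = 0 ∨ α = β) → θ α β = 0)
    (h2 : ∀ α β : FanoV, α ≠ 0 → β ≠ 0 → α ≠ β → θ α β = 1 ∨ θ α β = -1)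
    (h3 : ∀ α β : FanoV, α ≠ 0 → β ≠ 0 → α ≠ β → θ β α = -θ α β)
    (h4 : ∀ α β : FanoV, α ≠ 0 → β ≠ 0 → α ≠ β → θ α β = θ β (α + β)) :
    θ = fanoPhi (fanoRho θ) := by
  funext α β
  by_cases hv : α = 0 ∨ β = 0 ∨ α = β
  · rw [h1 α β hv, fano_phi_c1 (fanoRho θ) α β hv]
  · have hk := fano_key θ h2 h3 h4 (fanoIdx α β)
    have hcov := fano_cover α β hv
    set i := fanoIdx α β with hI
    obtain ⟨k1, k2, k3, k4, k5, k6⟩ := hk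
    rcases hcov with ⟨e1, e2⟩ | ⟨e1, e2⟩ | ⟨e1, e2⟩ | ⟨e1, e2⟩ |
      ⟨e1, e2⟩ | ⟨e1, e2⟩ <;> rw [e1, e2]
    · exact k1
    · exact k2
    · exact k3
    · exact k4
    · exact k5
    · exact k6

set_option maxHeartbeats 4000000 in
lemma fano_count : (Finset.univ.filter (fun s : Fin 7 → Bool => fanoCoh s)).card = 16 := by
  decide

/-- There are exactly 16 coherent orientations of the Fano plane.  Points of the Fano
plane are the nonzero vectors of `F₂³`; lines are the triples `{α, β, α+β}`.  A choice of
a cyclic orientation of every line is encoded by sign constants `θ_{α,β} = ±1` defined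
for distinct nonzero `α, β` (with `θ_{α,β} = 1` iff `β` follows `α` in the orientation of
the line through `α` and `β`), so that `θ_{β,α} = -θ_{α,β}` and `θ` is constant along the
cyclic order of each line (`θ_{α,β} = θ_{β,α+β}`); we normalize `θ` to be `0` on all
other pairs.  The orientation is coherent when the triangle relations
`θ_{α,β} θ_{α+β,γ} = θ_{β,γ} θ_{β+γ,α} = θ_{γ,α} θ_{γ+α,β}` hold for every triangle
`(α, β, γ)`.  Exactly 16 of the `2⁷` orientations are coherent. -/
theorem coherent_orientations_of_fano_plane_card :
    {θ : (Fin 3 → ZMod 2) → (Fin 3 → ZMod 2) → ℤ |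
      (∀ α β, (α = 0 ∨ β = 0 ∨ α = β) → θ α β = 0) ∧
      (∀ α β, α ≠ 0 → β ≠ 0 → α ≠ β → θ α β = 1 ∨ θ α β = -1) ∧
      (∀ α β, α ≠ 0 → β ≠ 0 → α ≠ β → θ β α = -θ α β) ∧
      (∀ α β, α ≠ 0 → β ≠ 0 → α ≠ β → θ α β = θ β (α + β)) ∧
      (∀ α β γ, α ≠ 0 → β ≠ 0 → γ ≠ 0 → α ≠ β → β ≠ γ → α ≠ γ → γ ≠ α + β →
        θ α β * θ (α + β) γ = θ β γ * θ (β + γ) α ∧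
        θ β γ * θ (β + γ) α = θ γ α * θ (γ + α) β)}.ncard = 16 := by
  have hset : {θ : (Fin 3 → ZMod 2) → (Fin 3 → ZMod 2) → ℤ |
      (∀ α β, (α = 0 ∨ β = 0 ∨ α = β) → θ α β = 0) ∧
      (∀ α β, α ≠ 0 → β ≠ 0 → α ≠ β → θ α β = 1 ∨ θ α β = -1) ∧
      (∀ α β, α ≠ 0 → β ≠ 0 → α ≠ β → θ β α = -θ α β) ∧
      (∀ α β, α ≠ 0 → β ≠ 0 → α ≠ β → θ α β = θ β (α + β)) ∧
      (∀ α β γ, α ≠ 0 → β ≠ 0 → γ ≠ 0 → α ≠ β → β ≠ γ → α ≠ γ → γ ≠ α + β →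
        θ α β * θ (α + β) γ = θ β γ * θ (β + γ) α ∧
        θ β γ * θ (β + γ) α = θ γ α * θ (γ + α) β)} = fanoPhi '' {s | fanoCoh s} := by
    ext θ
    simp only [Set.mem_setOf_eq, Set.mem_image]
    constructor
    · rintro ⟨h1, h2, h3, h4, h5⟩
      have e := (fano_rep θ h1 h2 h3 h4).symm
      refine ⟨fanoRho θ, ?_, e⟩
      intro α β γ hα hβ hγ hαβ hβγ hαγ hγαβ
      rw [e]
      exact h5 α β γ hα hβ hγ hαβ hβγ hαγ hγαβ
    · rintro ⟨s, hs, rfl⟩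
      exact ⟨fano_phi_c1 s, fano_phi_c2 s, fano_phi_c3 s, fano_phi_c4 s, hs⟩
  rw [hset, Set.ncard_image_of_injective _ fano_inj]
  have hfin : {s : Fin 7 → Bool | fanoCoh s} =
      ↑(Finset.univ.filter (fun s : Fin 7 → Bool => fanoCoh s)) := by
    ext s
    simp
  rw [hfin, Set.ncard_coe_finset]
  exact fano_count
end
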